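/- arXiv:1210.7598 — 9 statements merged into one kernel-verified Lean document; each statement's English description precedes it below -/
import Mathlib

section
/- For 1 ≤ i < j ≤ k and h = 1,2, the Wronskian satisfies the polynomial identity ν_{ij,h}(t) = (a_{i,h} − a_{j,h}) · t² · (∏_{r=1, r≠i,j}^{g−1}(t − a_{r,h}))². -/
open Polynomial Finset

/-- `A_h = ∏_{i=1}^{g-1} a_{i,h}`. -/
noncomputable def Aprod (g : ℕ) (a : ℕ → ℕ → ℂ) (h : ℕ) : ℂ :=
  ∏ i ∈ Finset.Icc 1 (g - 1), a i h

/-- `d_2 = 1`, `d_1 = -A_1/A_2`. -/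
noncomputable def dcoef (g : ℕ) (a : ℕ → ℕ → ℂ) (h : ℕ) : ℂ :=
  if h = 1 then -Aprod g a 1 / Aprod g a 2 else 1

/-- The polynomial `α_{i,h}`: for `1 ≤ i ≤ k = ⌊g/2⌋`,
`α_{i,h}(t) = t·∏_{r≠i}(t − a_{r,h})`; for `k+1 ≤ i ≤ g−1`,
`α_{i,h}(t) = −(d_h a_{i,h}/A_h)·∏_{r≠i}(t − a_{r,h})`. -/
noncomputable def alphaPoly (g : ℕ) (a : ℕ → ℕ → ℂ) (i h : ℕ) : Polynomial ℂ :=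
  if i ≤ g / 2 then
    X * ∏ r ∈ (Finset.Icc 1 (g - 1)).erase i, (X - C (a r h))
  else
    C (-(dcoef g a h * a i h / Aprod g a h)) *
      ∏ r ∈ (Finset.Icc 1 (g - 1)).erase i, (X - C (a r h))

/-- Wronskian `ν_{ij,h} = α_{i,h} α'_{j,h} − α_{j,h} α'_{i,h}`. -/
noncomputable def nuPoly (g : ℕ) (a : ℕ → ℕ → ℂ) (i j h : ℕ) : Polynomial ℂ :=
  alphaPoly g a i h * derivative (alphaPoly g a j h)
    - alphaPoly g a j h * derivative (alphaPoly g a i h)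

/-- Torsion values: for `1 ≤ m ≤ g` (with the convention `a_{g,h} = 0`),
`τ_{ij,m} = α'_{j,1}(a_{m,1})·α'_{i,2}(a_{m,2}) − α'_{i,1}(a_{m,1})·α'_{j,2}(a_{m,2})`;
for `m = g+1`, `τ_{ij,g+1} = c_{j,1}c_{i,2} − c_{i,1}c_{j,2}` where `c_{i,h}` is the
coefficient of `t^{g-2}` in `α_{i,h}`. -/
noncomputable def tauVal (g : ℕ) (a : ℕ → ℕ → ℂ) (i j m : ℕ) : ℂ :=
  if m ≤ g then
    (derivative (alphaPoly g a j 1)).eval (if m = g then 0 else a m 1) *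
        (derivative (alphaPoly g a i 2)).eval (if m = g then 0 else a m 2)
      - (derivative (alphaPoly g a i 1)).eval (if m = g then 0 else a m 1) *
        (derivative (alphaPoly g a j 2)).eval (if m = g then 0 else a m 2)
  else
    (alphaPoly g a j 1).coeff (g - 2) * (alphaPoly g a i 2).coeff (g - 2)
      - (alphaPoly g a i 1).coeff (g - 2) * (alphaPoly g a j 2).coeff (g - 2)

/-- The `(5g−5) × ((g−1)(g−2)/2)` Gaussian matrix: the column indexed by the pair
`(i,j)`, `1 ≤ i < j ≤ g−1`, consists of the `2g−3` coefficients of `ν_{ij,1}`, the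
`2g−3` coefficients of `ν_{ij,2}`, and then `τ_{ij,1}, …, τ_{ij,g+1}`. -/
noncomputable def gaussMatrix (g : ℕ) (a : ℕ → ℕ → ℂ) :
    Matrix (Fin (5 * g - 5))
      {p : Fin g × Fin g // 1 ≤ (p.1 : ℕ) ∧ (p.1 : ℕ) < (p.2 : ℕ)} ℂ :=
  fun r p =>
    if (r : ℕ) < 2 * g - 3 then (nuPoly g a (p.1.1 : ℕ) (p.1.2 : ℕ) 1).coeff (r : ℕ)
    else if (r : ℕ) < 2 * (2 * g - 3) then
      (nuPoly g a (p.1.1 : ℕ) (p.1.2 : ℕ) 2).coeff ((r : ℕ) - (2 * g - 3))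
    else tauVal g a (p.1.1 : ℕ) (p.1.2 : ℕ) ((r : ℕ) - 2 * (2 * g - 3) + 1)

/-- The parameters `a_{1,h}, …, a_{g−1,h}` (`h = 1,2`) are nonzero and pairwise
distinct. -/
def validParams (g : ℕ) (a : ℕ → ℕ → ℂ) : Prop :=
  ∀ h, h = 1 ∨ h = 2 →
    (∀ i ∈ Finset.Icc 1 (g - 1), a i h ≠ 0) ∧
      ∀ i ∈ Finset.Icc 1 (g - 1), ∀ j ∈ Finset.Icc 1 (g - 1), i ≠ j → a i h ≠ a j h

/-- For `1 ≤ i < j ≤ k = ⌊g/2⌋` and `h = 1,2`,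
`ν_{ij,h}(t) = (a_{i,h} − a_{j,h}) · t² · (∏_{r≠i,j}(t − a_{r,h}))²`. -/
theorem nuPoly_eq_of_le_half (g : ℕ) (hg : 3 ≤ g) (a : ℕ → ℕ → ℂ)
    (ha : validParams g a) (h : ℕ) (hh : h = 1 ∨ h = 2)
    (i j : ℕ) (hi : 1 ≤ i) (hij : i < j) (hj : j ≤ g / 2) :
    nuPoly g a i j h =
      C (a i h - a j h) * X ^ 2 *
        (∏ r ∈ ((Finset.Icc 1 (g - 1)).erase i).erase j, (X - C (a r h))) ^ 2 := by
  have hk : g / 2 ≤ g - 1 := by omega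
  have hi2 : i ≤ g / 2 := le_of_lt (lt_of_lt_of_le hij hj)
  have hiS : i ∈ Finset.Icc 1 (g - 1) := by
    simp only [Finset.mem_Icc]; omega
  have hjS : j ∈ Finset.Icc 1 (g - 1) := by
    simp only [Finset.mem_Icc]; omega
  set Q := ∏ r ∈ ((Finset.Icc 1 (g - 1)).erase i).erase j, (X - C (a r h)) with hQ
  have hPi : ∏ r ∈ (Finset.Icc 1 (g - 1)).erase i, (X - C (a r h))
      = (X - C (a j h)) * Q := by
    rw [hQ, ← Finset.mul_prod_erase _ _
      (Finset.mem_erase.mpr ⟨(by omega : j ≠ i), hjS⟩)]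
  have hPj : ∏ r ∈ (Finset.Icc 1 (g - 1)).erase j, (X - C (a r h))
      = (X - C (a i h)) * Q := by
    rw [hQ, Finset.erase_right_comm, ← Finset.mul_prod_erase _ _
      (Finset.mem_erase.mpr ⟨(by omega : i ≠ j), hiS⟩)]
  unfold nuPoly alphaPoly
  rw [if_pos hi2, if_pos hj, hPi, hPj]
  simp only [derivative_mul, derivative_X, derivative_sub, derivative_C, sub_zero,
    one_mul, mul_one, C_sub]
  ring
end

section
/- For k+1 ≤ i < j ≤ g−1 and h = 1,2, the Wronskian satisfies the polynomial identity ν_{ij,h}(t) = ((a_{i,h} − a_{j,h}) a_{i,h} a_{j,h} / A_2²) · (∏_{r=1, r≠i,j}^{g−1}(t − a_{r,h}))². -/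
open Polynomial Finset

/-- For `k+1 ≤ i < j ≤ g−1` (with `k = ⌊g/2⌋`) and `h = 1,2`,
`ν_{ij,h}(t) = ((a_{i,h} − a_{j,h}) a_{i,h} a_{j,h} / A_2²) · (∏_{r≠i,j}(t − a_{r,h}))²`. -/
theorem nuPoly_eq_of_half_lt (g : ℕ) (hg : 3 ≤ g) (a : ℕ → ℕ → ℂ)
    (ha : validParams g a) (h : ℕ) (hh : h = 1 ∨ h = 2)
    (i j : ℕ) (hi : g / 2 + 1 ≤ i) (hij : i < j) (hj : j ≤ g - 1) :
    nuPoly g a i j h =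
      C ((a i h - a j h) * a i h * a j h / (Aprod g a 2) ^ 2) *
        (∏ r ∈ ((Finset.Icc 1 (g - 1)).erase i).erase j, (X - C (a r h))) ^ 2 := by

  have hg2 : 1 ≤ g / 2 := by omega
  have hi1 : i ∈ Finset.Icc 1 (g-1) := by rw [Finset.mem_Icc]; omega
  have hj1 : j ∈ Finset.Icc 1 (g-1) := by rw [Finset.mem_Icc]; omega
  have hne : i ≠ j := hij.ne
  set s := Finset.Icc 1 (g-1) with hs
  set Q := ∏ r ∈ (s.erase i).erase j, (X - C (a r h)) with hQ
  have hjmem : j ∈ s.erase i := Finset.mem_erase.mpr ⟨hne.symm, hj1⟩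
  have himem : i ∈ s.erase j := Finset.mem_erase.mpr ⟨hne, hi1⟩
  have hPi : ∏ r ∈ s.erase i, (X - C (a r h)) = (X - C (a j h)) * Q :=
    (Finset.mul_prod_erase _ _ hjmem).symm
  have hPj : ∏ r ∈ s.erase j, (X - C (a r h)) = (X - C (a i h)) * Q := by
    rw [← Finset.mul_prod_erase _ _ himem, Finset.erase_right_comm]
  have hii : ¬ i ≤ g / 2 := by omega
  have hjj : ¬ j ≤ g / 2 := by omega
  have hA : ∀ h', h' = 1 ∨ h' = 2 → Aprod g a h' ≠ 0 := by
    intro h' hh'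
    exact Finset.prod_ne_zero_iff.mpr (fun r hr => ((ha h' hh').1 r hr))
  set ci := -(dcoef g a h * a i h / Aprod g a h) with hci
  set cj := -(dcoef g a h * a j h / Aprod g a h) with hcj
  have hconst : ci * cj * (a i h - a j h)
      = (a i h - a j h) * a i h * a j h / (Aprod g a 2) ^ 2 := by
    rcases hh with rfl | rfl
    · rw [hci, hcj]; simp only [dcoef, if_pos rfl, ↓reduceIte]
      field_simp [hA 1 (Or.inl rfl), hA 2 (Or.inr rfl)]
    · rw [hci, hcj]; simp only [dcoef]; norm_num
      field_simp [hA 2 (Or.inr rfl)]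
  rw [← hconst]
  unfold nuPoly alphaPoly
  rw [if_neg hii, if_neg hjj, ← hs, hPi, hPj, ← hci, ← hcj]
  simp only [derivative_mul, derivative_C, derivative_sub, derivative_X,
    zero_mul, zero_add, sub_zero, one_mul, map_mul, map_sub]
  ring
end

section
/- For 1 ≤ i ≤ k < j ≤ g−1 and h = 1,2, the Wronskian satisfies the polynomial identity ν_{ij,h}(t) = ((−1)^h a_{j,h} / A_2) · (t² − 2 a_{i,h} t + a_{i,h} a_{j,h}) · (∏_{r=1, r≠i,j}^{g−1}(t − a_{r,h}))². -/
open Polynomial Finset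

/-- For `1 ≤ i ≤ k < j ≤ g−1` (with `k = ⌊g/2⌋`) and `h = 1,2`,
`ν_{ij,h}(t) = ((−1)^h a_{j,h}/A_2) · (t² − 2a_{i,h} t + a_{i,h}a_{j,h}) · (∏_{r≠i,j}(t − a_{r,h}))²`. -/
theorem nuPoly_eq_of_le_half_lt (g : ℕ) (hg : 3 ≤ g) (a : ℕ → ℕ → ℂ)
    (ha : validParams g a) (h : ℕ) (hh : h = 1 ∨ h = 2)
    (i j : ℕ) (hi : 1 ≤ i) (hik : i ≤ g / 2) (hkj : g / 2 < j) (hj : j ≤ g - 1) :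
    nuPoly g a i j h =
      C ((-1 : ℂ) ^ h * a j h / Aprod g a 2) *
        (X ^ 2 - C (2 * a i h) * X + C (a i h * a j h)) *
        (∏ r ∈ ((Finset.Icc 1 (g - 1)).erase i).erase j, (X - C (a r h))) ^ 2 := by
  have hiS : i ∈ Finset.Icc 1 (g - 1) := by
    simp only [Finset.mem_Icc]
    have := Nat.div_lt_self (by omega : 0 < g) (by norm_num : 1 < 2)
    omega
  have hjS : j ∈ Finset.Icc 1 (g - 1) := by
    simp only [Finset.mem_Icc]; omega
  have hij : i ≠ j := by omega
  obtain ⟨hne, -⟩ := ha h hh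
  obtain ⟨hne2, -⟩ := ha 2 (Or.inr rfl)
  have hA : Aprod g a h ≠ 0 := by
    rw [Aprod]; exact Finset.prod_ne_zero_iff.2 hne
  have hA2 : Aprod g a 2 ≠ 0 := by
    rw [Aprod]; exact Finset.prod_ne_zero_iff.2 hne2
  have hc : (-(dcoef g a h * a j h / Aprod g a h))
      = -((-1 : ℂ) ^ h * a j h / Aprod g a 2) := by
    rcases hh with rfl | rfl
    · obtain ⟨hne1, -⟩ := ha 1 (Or.inl rfl)
      have hA1 : Aprod g a 1 ≠ 0 := by
        rw [Aprod]; exact Finset.prod_ne_zero_iff.2 hne1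
      rw [dcoef, if_pos rfl]
      field_simp
    · rw [dcoef, if_neg (by norm_num)]
      norm_num
  set Q : Polynomial ℂ :=
    ∏ r ∈ ((Finset.Icc 1 (g - 1)).erase i).erase j, (X - C (a r h)) with hQ
  have e1 : alphaPoly g a i h = X * ((X - C (a j h)) * Q) := by
    rw [alphaPoly, if_pos hik,
      ← Finset.mul_prod_erase _ _ (Finset.mem_erase.2 ⟨hij.symm, hjS⟩)]
  have e2 : alphaPoly g a j h
      = C (-((-1 : ℂ) ^ h * a j h / Aprod g a 2)) * ((X - C (a i h)) * Q) := by
    rw [alphaPoly, if_neg (by omega), hc]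
    congr 1
    rw [← Finset.mul_prod_erase _ _ (Finset.mem_erase.2 ⟨hij, hiS⟩),
      Finset.erase_right_comm]
  rw [nuPoly, e1, e2]
  simp only [derivative_mul, derivative_X, derivative_sub, derivative_C, map_neg,
    map_mul, map_ofNat, map_one, sub_zero, one_mul, mul_one]
  ring
end

section
/- Let g = 2k be even and h ∈ {1,2}, and write δ_h = (−1)^{h+1}. Then: (i) for 1 ≤ i < k, ν_{ik,h}(a_{k,h}) = a_{k,h}² (a_{i,h} − a_{k,h}) ∏_{ℓ≠i,k}(a_{k,h} − a_{ℓ,h})², and ν'_{ik,h}(a_{k,h}) = 2 a_{k,h} (a_{i,h} − a_{k,h}) ∏_{ℓ≠i,k}(a_{k,h} − a_{ℓ,h}) · (∏_{ℓ≠i,k}(a_{k,h} − a_{ℓ,h}) + a_{k,h} ∑_{m≠i,k} ∏_{ℓ≠i,k,m}(a_{k,h} − a_{ℓ,h})); (ii) for k < j ≤ g−1, ν_{kj,h}(a_{k,h}) = δ_h (a_{k,h} a_{j,h}/A_2)(a_{k,h} − a_{j,h}) ∏_{ℓ≠k,j}(a_{k,h} − a_{ℓ,h})², and ν'_{kj,h}(a_{k,h})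 = δ_h (2 a_{k,h} a_{j,h}/A_2)(a_{k,h} − a_{j,h}) ∏_{ℓ≠k,j}(a_{k,h} − a_{ℓ,h}) · ∑_{m≠k,j} ∏_{ℓ≠k,j,m}(a_{k,h} − a_{ℓ,h}). All index ranges are over {1, …, g−1}. -/
open Polynomial Finset

lemma eval_derivative_prod_lin (T : Finset ℕ) (f : ℕ → ℂ) (t : ℂ) :
    (derivative (∏ ℓ ∈ T, (X - C (f ℓ)))).eval t
      = ∑ m ∈ T, ∏ ℓ ∈ T.erase m, (t - f ℓ) := by
  classical
  induction T using Finset.induction_on with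
  | empty => simp
  | @insert x s hx ih =>
    rw [Finset.prod_insert hx, derivative_mul, Finset.sum_insert hx,
      Finset.erase_insert hx]
    simp only [derivative_sub, derivative_X, derivative_C, sub_zero, one_mul,
      eval_add, eval_mul, eval_sub, eval_X, eval_C, eval_prod, ih]
    rw [Finset.mul_sum]
    congr 1
    refine Finset.sum_congr rfl fun m hm => ?_
    rw [Finset.erase_insert_of_ne (by rintro rfl; exact hx hm),
      Finset.prod_insert (fun hxs => hx (Finset.mem_of_mem_erase hxs))]

/-- Let `g = 2k` be even, `h ∈ {1,2}`, `δ_h = (−1)^{h+1}`.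
(i) For `1 ≤ i < k`:
`ν_{ik,h}(a_{k,h}) = a_{k,h}²(a_{i,h} − a_{k,h})∏_{ℓ≠i,k}(a_{k,h} − a_{ℓ,h})²` and
`ν'_{ik,h}(a_{k,h}) = 2a_{k,h}(a_{i,h} − a_{k,h})∏_{ℓ≠i,k}(a_{k,h} − a_{ℓ,h}) ·
(∏_{ℓ≠i,k}(a_{k,h} − a_{ℓ,h}) + a_{k,h}∑_{m≠i,k}∏_{ℓ≠i,k,m}(a_{k,h} − a_{ℓ,h}))`.
(ii) For `k < j ≤ g−1`:
`ν_{kj,h}(a_{k,h}) = δ_h(a_{k,h}a_{j,h}/A_2)(a_{k,h} − a_{j,h})∏_{ℓ≠k,j}(a_{k,h} − a_{ℓ,h})²` and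
`ν'_{kj,h}(a_{k,h}) = δ_h(2a_{k,h}a_{j,h}/A_2)(a_{k,h} − a_{j,h})∏_{ℓ≠k,j}(a_{k,h} − a_{ℓ,h})
· ∑_{m≠k,j}∏_{ℓ≠k,j,m}(a_{k,h} − a_{ℓ,h})`. -/
theorem nuPoly_eval_at_node_even (g k : ℕ) (hgk : g = 2 * k) (hg : 3 ≤ g)
    (a : ℕ → ℕ → ℂ) (ha : validParams g a) (h : ℕ) (hh : h = 1 ∨ h = 2) :
    (∀ i, 1 ≤ i → i < k →
      (nuPoly g a i k h).eval (a k h) =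
        a k h ^ 2 * (a i h - a k h) *
          ∏ ℓ ∈ ((Finset.Icc 1 (g - 1)).erase i).erase k, (a k h - a ℓ h) ^ 2 ∧
      (derivative (nuPoly g a i k h)).eval (a k h) =
        2 * a k h * (a i h - a k h) *
          (∏ ℓ ∈ ((Finset.Icc 1 (g - 1)).erase i).erase k, (a k h - a ℓ h)) *
          ((∏ ℓ ∈ ((Finset.Icc 1 (g - 1)).erase i).erase k, (a k h - a ℓ h)) +
            a k h * ∑ m ∈ ((Finset.Icc 1 (g - 1)).erase i).erase k,
              ∏ ℓ ∈ (((Finset.Icc 1 (g - 1)).erase i).erase k).erase m,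
                (a k h - a ℓ h))) ∧
    (∀ j, k < j → j ≤ g - 1 →
      (nuPoly g a k j h).eval (a k h) =
        (-1 : ℂ) ^ (h + 1) * (a k h * a j h / Aprod g a 2) * (a k h - a j h) *
          ∏ ℓ ∈ ((Finset.Icc 1 (g - 1)).erase k).erase j, (a k h - a ℓ h) ^ 2 ∧
      (derivative (nuPoly g a k j h)).eval (a k h) =
        (-1 : ℂ) ^ (h + 1) * (2 * a k h * a j h / Aprod g a 2) * (a k h - a j h) *
          (∏ ℓ ∈ ((Finset.Icc 1 (g - 1)).erase k).erase j, (a k h - a ℓ h)) *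
          ∑ m ∈ ((Finset.Icc 1 (g - 1)).erase k).erase j,
            ∏ ℓ ∈ (((Finset.Icc 1 (g - 1)).erase k).erase j).erase m,
              (a k h - a ℓ h)) := by
  have hk2 : 2 ≤ k := by omega
  have hk : k ∈ Finset.Icc 1 (g - 1) := by simp; omega
  have hA1 : Aprod g a 1 ≠ 0 := by
    rw [Aprod]; exact Finset.prod_ne_zero_iff.2 (ha 1 (Or.inl rfl)).1
  have hA2 : Aprod g a 2 ≠ 0 := by
    rw [Aprod]; exact Finset.prod_ne_zero_iff.2 (ha 2 (Or.inr rfl)).1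
  constructor
  · intro i hi1 hik
    have hi : i ∈ Finset.Icc 1 (g - 1) := by simp; omega
    have hik' : i ≠ k := by omega
    set T := ((Finset.Icc 1 (g - 1)).erase i).erase k with hT
    set Q : Polynomial ℂ := ∏ ℓ ∈ T, (X - C (a ℓ h)) with hQ
    have hprodi : ∏ r ∈ (Finset.Icc 1 (g - 1)).erase i, (X - C (a r h))
        = (X - C (a k h)) * Q :=
      (Finset.mul_prod_erase _ _ (Finset.mem_erase.2 ⟨Ne.symm hik', hk⟩)).symm
    have hprodk : ∏ r ∈ (Finset.Icc 1 (g - 1)).erase k, (X - C (a r h))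
        = (X - C (a i h)) * Q := by
      rw [hQ, hT, Finset.erase_right_comm]
      exact (Finset.mul_prod_erase _ _ (Finset.mem_erase.2 ⟨hik', hi⟩)).symm
    have hai : alphaPoly g a i h = X * ((X - C (a k h)) * Q) := by
      rw [alphaPoly, if_pos (show i ≤ g / 2 by omega), hprodi]
    have hak : alphaPoly g a k h = X * ((X - C (a i h)) * Q) := by
      rw [alphaPoly, if_pos (show k ≤ g / 2 by omega), hprodk]
    have hnu : nuPoly g a i k h = C (a i h - a k h) * (X ^ 2 * Q ^ 2) := by
      rw [nuPoly, hai, hak]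
      simp only [derivative_mul, derivative_X, derivative_sub, derivative_C, C_sub]
      ring
    have hQe : Q.eval (a k h) = ∏ ℓ ∈ T, (a k h - a ℓ h) := by
      simp [hQ, eval_prod]
    have hQd : (derivative Q).eval (a k h)
        = ∑ m ∈ T, ∏ ℓ ∈ T.erase m, (a k h - a ℓ h) := by
      rw [hQ]; exact eval_derivative_prod_lin T (fun ℓ => a ℓ h) (a k h)
    constructor
    · rw [hnu]
      simp only [eval_mul, eval_C, eval_pow, eval_X, hQe, Finset.prod_pow]
      ring
    · rw [hnu]
      simp only [derivative_mul, derivative_C, derivative_pow, derivative_X,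
        Nat.cast_ofNat, mul_one]
      simp only [eval_mul, eval_add, eval_C, eval_pow, eval_X, eval_mul, hQe, hQd,
        zero_mul, eval_zero, mul_zero, zero_add]
      ring
  · intro j hkj hjg
    have hj : j ∈ Finset.Icc 1 (g - 1) := by simp; omega
    have hjk' : j ≠ k := by omega
    set T := ((Finset.Icc 1 (g - 1)).erase k).erase j with hT
    set Q : Polynomial ℂ := ∏ ℓ ∈ T, (X - C (a ℓ h)) with hQ
    have hprodk : ∏ r ∈ (Finset.Icc 1 (g - 1)).erase k, (X - C (a r h))
        = (X - C (a j h)) * Q :=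
      (Finset.mul_prod_erase _ _ (Finset.mem_erase.2 ⟨hjk', hj⟩)).symm
    have hprodj : ∏ r ∈ (Finset.Icc 1 (g - 1)).erase j, (X - C (a r h))
        = (X - C (a k h)) * Q := by
      rw [hQ, hT, Finset.erase_right_comm]
      exact (Finset.mul_prod_erase _ _ (Finset.mem_erase.2 ⟨Ne.symm hjk', hk⟩)).symm
    set c : ℂ := -(dcoef g a h * a j h / Aprod g a h) with hc
    have hcval : c = (-1 : ℂ) ^ (h + 1) * a j h / Aprod g a 2 := by
      rcases hh with rfl | rfl
      · rw [hc, dcoef, if_pos rfl]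
        field_simp [hA1, hA2]
        ring
      · rw [hc, dcoef, if_neg (by norm_num)]
        field_simp [hA2]
        ring
    have hak : alphaPoly g a k h = X * ((X - C (a j h)) * Q) := by
      rw [alphaPoly, if_pos (show k ≤ g / 2 by omega), hprodk]
    have haj : alphaPoly g a j h = C c * ((X - C (a k h)) * Q) := by
      rw [alphaPoly, if_neg (show ¬ j ≤ g / 2 by omega), hprodj, hc]
    have hnu : nuPoly g a k j h = C c * Q ^ 2 *
        (X * (X - C (a j h)) - (X - C (a k h)) * (X - C (a j h))
          - X * (X - C (a k h))) := by
      rw [nuPoly, hak, haj]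
      simp only [derivative_mul, derivative_X, derivative_sub, derivative_C]
      ring
    have hQe : Q.eval (a k h) = ∏ ℓ ∈ T, (a k h - a ℓ h) := by
      simp [hQ, eval_prod]
    have hQd : (derivative Q).eval (a k h)
        = ∑ m ∈ T, ∏ ℓ ∈ T.erase m, (a k h - a ℓ h) := by
      rw [hQ]; exact eval_derivative_prod_lin T (fun ℓ => a ℓ h) (a k h)
    constructor
    · rw [hnu]
      simp only [eval_mul, eval_sub, eval_C, eval_pow, eval_X, hQe, Finset.prod_pow]
      rw [hcval]
      ring
    · rw [hnu]
      simp only [derivative_mul, derivative_C, derivative_pow, derivative_sub,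
        derivative_X, Nat.cast_ofNat, mul_one]
      simp only [eval_mul, eval_add, eval_sub, eval_C, eval_pow, eval_X, hQe, hQd,
        zero_mul, eval_zero, mul_zero, zero_add, eval_one]
      rw [hcval]
      ring
end

section
/- Let g = 2k+1 be odd and h ∈ {1,2}, and write δ_h = (−1)^{h+1}. Then: (i) for 1 ≤ i ≤ k, ν_{i,k+1,h}(a_{k+1,h}) = −δ_h (a_{k+1,h}² − a_{i,h} a_{k+1,h}) a_{k+1,h} / A_2 · ∏_{ℓ≠i,k+1}(a_{k+1,h} − a_{ℓ,h})², and ν'_{i,k+1,h}(a_{k+1,h}) = −δ_h (2 a_{k+1,h}(a_{k+1,h} − a_{i,h})/A_2) ∏_{ℓ≠i,k+1}(a_{k+1,h} − a_{ℓ,h}) · (∏_{ℓ≠i,k+1}(a_{k+1,h} − a_{ℓ,h}) + a_{k+1,h} ∑_{m≠i,k+1} ∏_{ℓ≠i,k+1,m}(a_{k+1,h} − a_{ℓ,h})); (ii) for k+1 < j ≤ g−1, ν_{k+1,j,h}(a_{k+1,h}) = ∏_{ℓ≠j,k+1}(a_{k+1,h} − a_{ℓ,h})² · (a_{k+1,h}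 − a_{j,h}) a_{k+1,h} a_{j,h} / A_2², and ν'_{k+1,j,h}(a_{k+1,h}) = 2 ∏_{ℓ≠k+1,j}(a_{k+1,h} − a_{ℓ,h}) · ∑_{m≠k+1,j} ∏_{ℓ≠k+1,j,m}(a_{k+1,h} − a_{ℓ,h}) · (a_{k+1,h} − a_{j,h}) a_{k+1,h} a_{j,h} / A_2². All index ranges are over {1, …, g−1}. -/
open Polynomial Finset

lemma eval_prod_XsubC (s : Finset ℕ) (b : ℕ → ℂ) (x : ℂ) :
    (∏ r ∈ s, (X - C (b r))).eval x = ∏ r ∈ s, (x - b r) := by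
  simp [eval_prod]

lemma eval_deriv_prod_XsubC (s : Finset ℕ) (b : ℕ → ℂ) (x : ℂ) :
    (Polynomial.derivative (∏ r ∈ s, (X - C (b r)))).eval x
      = ∑ m ∈ s, ∏ ℓ ∈ s.erase m, (x - b ℓ) := by
  classical
  induction s using Finset.induction_on with
  | empty => simp
  | @insert a s ha ih =>
    rw [Finset.prod_insert ha, derivative_mul, eval_add, eval_mul, eval_mul, ih,
      Finset.sum_insert ha, Finset.erase_insert ha]
    simp only [derivative_sub, derivative_X, derivative_C, sub_zero, eval_one, eval_sub,
      eval_X, eval_C, one_mul]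
    congr 1
    · exact eval_prod_XsubC s b x
    rw [Finset.mul_sum]
    refine Finset.sum_congr rfl fun m hm => ?_
    rw [Finset.erase_insert_of_ne (by rintro rfl; exact ha hm),
      Finset.prod_insert (fun hc => ha (Finset.mem_of_mem_erase hc))]

/-- Let `g = 2k+1` be odd, `h ∈ {1,2}`, `δ_h = (−1)^{h+1}`.
(i) For `1 ≤ i ≤ k`:
`ν_{i,k+1,h}(a_{k+1,h}) = −δ_h(a_{k+1,h}² − a_{i,h}a_{k+1,h})a_{k+1,h}/A_2 ·
∏_{ℓ≠i,k+1}(a_{k+1,h} − a_{ℓ,h})²` and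
`ν'_{i,k+1,h}(a_{k+1,h}) = −δ_h(2a_{k+1,h}(a_{k+1,h} − a_{i,h})/A_2)∏_{ℓ≠i,k+1}(a_{k+1,h} − a_{ℓ,h})
· (∏_{ℓ≠i,k+1}(a_{k+1,h} − a_{ℓ,h}) + a_{k+1,h}∑_{m≠i,k+1}∏_{ℓ≠i,k+1,m}(a_{k+1,h} − a_{ℓ,h}))`.
(ii) For `k+1 < j ≤ g−1`:
`ν_{k+1,j,h}(a_{k+1,h}) = ∏_{ℓ≠j,k+1}(a_{k+1,h} − a_{ℓ,h})² · (a_{k+1,h} − a_{j,h})a_{k+1,h}a_{j,h}/A_2²` and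
`ν'_{k+1,j,h}(a_{k+1,h}) = 2∏_{ℓ≠k+1,j}(a_{k+1,h} − a_{ℓ,h}) ·
∑_{m≠k+1,j}∏_{ℓ≠k+1,j,m}(a_{k+1,h} − a_{ℓ,h}) · (a_{k+1,h} − a_{j,h})a_{k+1,h}a_{j,h}/A_2²`. -/
theorem nuPoly_eval_at_node_odd (g k : ℕ) (hgk : g = 2 * k + 1) (hg : 3 ≤ g)
    (a : ℕ → ℕ → ℂ) (ha : validParams g a) (h : ℕ) (hh : h = 1 ∨ h = 2) :
    (∀ i, 1 ≤ i → i ≤ k →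
      (nuPoly g a i (k + 1) h).eval (a (k + 1) h) =
        -((-1 : ℂ) ^ (h + 1)) * (a (k + 1) h ^ 2 - a i h * a (k + 1) h) *
            a (k + 1) h / Aprod g a 2 *
          ∏ ℓ ∈ ((Finset.Icc 1 (g - 1)).erase i).erase (k + 1),
            (a (k + 1) h - a ℓ h) ^ 2 ∧
      (derivative (nuPoly g a i (k + 1) h)).eval (a (k + 1) h) =
        -((-1 : ℂ) ^ (h + 1)) *
          (2 * a (k + 1) h * (a (k + 1) h - a i h) / Aprod g a 2) *
          (∏ ℓ ∈ ((Finset.Icc 1 (g - 1)).erase i).erase (k + 1),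
            (a (k + 1) h - a ℓ h)) *
          ((∏ ℓ ∈ ((Finset.Icc 1 (g - 1)).erase i).erase (k + 1),
              (a (k + 1) h - a ℓ h)) +
            a (k + 1) h * ∑ m ∈ ((Finset.Icc 1 (g - 1)).erase i).erase (k + 1),
              ∏ ℓ ∈ (((Finset.Icc 1 (g - 1)).erase i).erase (k + 1)).erase m,
                (a (k + 1) h - a ℓ h))) ∧
    (∀ j, k + 1 < j → j ≤ g - 1 →
      (nuPoly g a (k + 1) j h).eval (a (k + 1) h) =
        (∏ ℓ ∈ ((Finset.Icc 1 (g - 1)).erase j).erase (k + 1),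
            (a (k + 1) h - a ℓ h) ^ 2) *
          ((a (k + 1) h - a j h) * a (k + 1) h * a j h / (Aprod g a 2) ^ 2) ∧
      (derivative (nuPoly g a (k + 1) j h)).eval (a (k + 1) h) =
        2 * (∏ ℓ ∈ ((Finset.Icc 1 (g - 1)).erase (k + 1)).erase j,
            (a (k + 1) h - a ℓ h)) *
          (∑ m ∈ ((Finset.Icc 1 (g - 1)).erase (k + 1)).erase j,
            ∏ ℓ ∈ (((Finset.Icc 1 (g - 1)).erase (k + 1)).erase j).erase m,
              (a (k + 1) h - a ℓ h)) *
          ((a (k + 1) h - a j h) * a (k + 1) h * a j h / (Aprod g a 2) ^ 2)) := by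
  have hk1 : 1 ≤ k := by omega
  have hA2 : Aprod g a 2 ≠ 0 :=
    Finset.prod_ne_zero_iff.mpr (ha 2 (Or.inr rfl)).1
  have hA1 : Aprod g a 1 ≠ 0 :=
    Finset.prod_ne_zero_iff.mpr (ha 1 (Or.inl rfl)).1
  have hd2 : ((-1 : ℂ) ^ (h + 1)) * ((-1 : ℂ) ^ (h + 1)) = 1 := by
    rcases hh with rfl | rfl <;> norm_num
  have cval : ∀ j : ℕ, (-(dcoef g a h * a j h / Aprod g a h))
      = (-1 : ℂ) ^ (h + 1) * a j h / Aprod g a 2 := by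
    intro j
    rcases hh with rfl | rfl
    · simp only [dcoef, if_pos rfl, ↓reduceIte]
      field_simp
      ring
    · simp only [dcoef, if_neg (by norm_num : (2 : ℕ) ≠ 1)]
      norm_num
      ring
  have hmem : k + 1 ∈ Finset.Icc 1 (g - 1) := by
    simp only [Finset.mem_Icc]; omega
  have halow : ∀ i : ℕ, i ≤ k → alphaPoly g a i h
      = X * ∏ r ∈ (Finset.Icc 1 (g - 1)).erase i, (X - C (a r h)) := by
    intro i hi
    rw [alphaPoly, if_pos (by omega)]
  have hahigh : ∀ j : ℕ, k + 1 ≤ j → alphaPoly g a j h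
      = C ((-1 : ℂ) ^ (h + 1) * a j h / Aprod g a 2) *
        ∏ r ∈ (Finset.Icc 1 (g - 1)).erase j, (X - C (a r h)) := by
    intro j hj
    rw [alphaPoly, if_neg (by omega), cval]
  constructor
  · -- part (i)
    intro i h1i hik
    have hiS : i ∈ Finset.Icc 1 (g - 1) := by
      simp only [Finset.mem_Icc]; omega
    have hmem' : k + 1 ∈ (Finset.Icc 1 (g - 1)).erase i :=
      Finset.mem_erase.mpr ⟨by omega, hmem⟩
    have hiS' : i ∈ (Finset.Icc 1 (g - 1)).erase (k + 1) :=
      Finset.mem_erase.mpr ⟨by omega, hiS⟩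
    have hcomm : ((Finset.Icc 1 (g - 1)).erase (k + 1)).erase i
        = ((Finset.Icc 1 (g - 1)).erase i).erase (k + 1) := Finset.erase_right_comm
    set U := ((Finset.Icc 1 (g - 1)).erase i).erase (k + 1) with hU
    set Q : Polynomial ℂ := ∏ r ∈ U, (X - C (a r h)) with hQdef
    have hPfac : ∏ r ∈ (Finset.Icc 1 (g - 1)).erase i, (X - C (a r h))
        = (X - C (a (k + 1) h)) * Q := (Finset.mul_prod_erase _ _ hmem').symm
    have hPjfac : ∏ r ∈ (Finset.Icc 1 (g - 1)).erase (k + 1), (X - C (a r h))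
        = (X - C (a i h)) * Q := by
      rw [← Finset.mul_prod_erase _ _ hiS', hcomm]
    have hQev : Q.eval (a (k + 1) h) = ∏ ℓ ∈ U, (a (k + 1) h - a ℓ h) :=
      eval_prod_XsubC ..
    have hQ'ev : (Polynomial.derivative Q).eval (a (k + 1) h)
        = ∑ m ∈ U, ∏ ℓ ∈ U.erase m, (a (k + 1) h - a ℓ h) :=
      eval_deriv_prod_XsubC ..
    constructor
    · rw [nuPoly, halow i hik, hahigh (k + 1) le_rfl, hPfac, hPjfac, Finset.prod_pow]
      simp only [derivative_mul, derivative_add, derivative_sub, derivative_X, derivative_C,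
        derivative_one, derivative_ofNat, derivative_natCast, derivative_X_pow, eval_pow,
        eval_ofNat, eval_natCast, Nat.cast_ofNat,
        eval_add, eval_mul, eval_sub, eval_X, eval_C, eval_one, sub_self, zero_mul, mul_zero,
        zero_add, add_zero, one_mul, mul_one, hQev, hQ'ev, eval_zero, sub_zero, zero_sub]
      ring
    · rw [nuPoly, halow i hik, hahigh (k + 1) le_rfl, hPfac, hPjfac]
      simp only [derivative_mul, derivative_add, derivative_sub, derivative_X, derivative_C,
        derivative_one, derivative_ofNat, derivative_natCast, derivative_X_pow, eval_pow,
        eval_ofNat, eval_natCast, Nat.cast_ofNat,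
        eval_add, eval_mul, eval_sub, eval_X, eval_C, eval_one, sub_self, zero_mul, mul_zero,
        zero_add, add_zero, one_mul, mul_one, hQev, hQ'ev, eval_zero, sub_zero, zero_sub]
      ring
  · -- part (ii)
    intro j hj1 hj2
    have hjS : j ∈ Finset.Icc 1 (g - 1) := by
      simp only [Finset.mem_Icc]; omega
    have hmem' : k + 1 ∈ (Finset.Icc 1 (g - 1)).erase j :=
      Finset.mem_erase.mpr ⟨by omega, hmem⟩
    have hjS' : j ∈ (Finset.Icc 1 (g - 1)).erase (k + 1) :=
      Finset.mem_erase.mpr ⟨by omega, hjS⟩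
    have hcomm : ((Finset.Icc 1 (g - 1)).erase j).erase (k + 1)
        = ((Finset.Icc 1 (g - 1)).erase (k + 1)).erase j := Finset.erase_right_comm
    rw [nuPoly, hahigh (k + 1) le_rfl, hahigh j (by omega)] at *
    constructor
    · rw [hcomm, Finset.prod_pow]
      set T := ((Finset.Icc 1 (g - 1)).erase (k + 1)).erase j with hT
      set R : Polynomial ℂ := ∏ r ∈ T, (X - C (a r h)) with hRdef
      have hP2fac : ∏ r ∈ (Finset.Icc 1 (g - 1)).erase j, (X - C (a r h))
          = (X - C (a (k + 1) h)) * R := by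
        rw [← Finset.mul_prod_erase _ _ hmem', hcomm]
      have hP1fac : ∏ r ∈ (Finset.Icc 1 (g - 1)).erase (k + 1), (X - C (a r h))
          = (X - C (a j h)) * R := (Finset.mul_prod_erase _ _ hjS').symm
      have hRev : R.eval (a (k + 1) h) = ∏ ℓ ∈ T, (a (k + 1) h - a ℓ h) :=
        eval_prod_XsubC ..
      have hR'ev : (Polynomial.derivative R).eval (a (k + 1) h)
          = ∑ m ∈ T, ∏ ℓ ∈ T.erase m, (a (k + 1) h - a ℓ h) :=
        eval_deriv_prod_XsubC ..
      rw [hP1fac, hP2fac]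
      simp only [derivative_mul, derivative_add, derivative_sub, derivative_X, derivative_C,
        derivative_one, derivative_ofNat, derivative_natCast, derivative_X_pow, eval_pow,
        eval_ofNat, eval_natCast, Nat.cast_ofNat,
        eval_add, eval_mul, eval_sub, eval_X, eval_C, eval_one, sub_self, zero_mul, mul_zero,
        zero_add, add_zero, one_mul, mul_one, hRev, hR'ev, eval_zero, sub_zero, zero_sub]
      linear_combination ((∏ ℓ ∈ T, (a (k + 1) h - a ℓ h)) ^ 2 *
        ((a (k + 1) h - a j h) * a (k + 1) h * a j h / Aprod g a 2 ^ 2)) * hd2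
    · set T := ((Finset.Icc 1 (g - 1)).erase (k + 1)).erase j with hT
      set R : Polynomial ℂ := ∏ r ∈ T, (X - C (a r h)) with hRdef
      have hP2fac : ∏ r ∈ (Finset.Icc 1 (g - 1)).erase j, (X - C (a r h))
          = (X - C (a (k + 1) h)) * R := by
        rw [← Finset.mul_prod_erase _ _ hmem', hcomm]
      have hP1fac : ∏ r ∈ (Finset.Icc 1 (g - 1)).erase (k + 1), (X - C (a r h))
          = (X - C (a j h)) * R := (Finset.mul_prod_erase _ _ hjS').symm
      have hRev : R.eval (a (k + 1) h) = ∏ ℓ ∈ T, (a (k + 1) h - a ℓ h) :=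
        eval_prod_XsubC ..
      have hR'ev : (Polynomial.derivative R).eval (a (k + 1) h)
          = ∑ m ∈ T, ∏ ℓ ∈ T.erase m, (a (k + 1) h - a ℓ h) :=
        eval_deriv_prod_XsubC ..
      rw [hP1fac, hP2fac]
      simp only [derivative_mul, derivative_add, derivative_sub, derivative_X, derivative_C,
        derivative_one, derivative_ofNat, derivative_natCast, derivative_X_pow, eval_pow,
        eval_ofNat, eval_natCast, Nat.cast_ofNat,
        eval_add, eval_mul, eval_sub, eval_X, eval_C, eval_one, sub_self, zero_mul, mul_zero,
        zero_add, add_zero, one_mul, mul_one, hRev, hR'ev, eval_zero, sub_zero, zero_sub]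
      linear_combination (2 * (∏ ℓ ∈ T, (a (k + 1) h - a ℓ h)) *
        (∑ m ∈ T, ∏ ℓ ∈ T.erase m, (a (k + 1) h - a ℓ h)) *
        ((a (k + 1) h - a j h) * a (k + 1) h * a j h / Aprod g a 2 ^ 2)) * hd2
end

section
/- For every integer k ≥ 7, the 4×4 rational matrix with rows (−k(k−2), −k(k−1), −2(k−1)², −(2k−1)(k−2)), ((k−2)², 2(k−1)², −2(k−1)³, −(2k−1)(k−2)²), (−k(k−2), −k(k−1), 2(k−1)², (2k−1)(k−2)), ((k−2)², 2(k−1)², 2(k−1)³, (2k−1)(k−2)²) is invertible. -/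
/-- For every integer `k ≥ 7`, the 4×4 rational matrix appearing in
the inductive step for even genus `g = 2k` is invertible. -/
theorem even_case_four_by_four_isUnit (k : ℤ) (hk : 7 ≤ k) :
    IsUnit
      (!![-(k : ℚ) * (k - 2), -(k : ℚ) * (k - 1), -2 * ((k : ℚ) - 1) ^ 2,
            -(2 * (k : ℚ) - 1) * (k - 2);
          ((k : ℚ) - 2) ^ 2, 2 * ((k : ℚ) - 1) ^ 2, -2 * ((k : ℚ) - 1) ^ 3,
            -(2 * (k : ℚ) - 1) * (k - 2) ^ 2;
          -(k : ℚ) * (k - 2), -(k : ℚ) * (k - 1), 2 * ((k : ℚ) - 1) ^ 2,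
            (2 * (k : ℚ) - 1) * (k - 2);
          ((k : ℚ) - 2) ^ 2, 2 * ((k : ℚ) - 1) ^ 2, 2 * ((k : ℚ) - 1) ^ 3,
            (2 * (k : ℚ) - 1) * (k - 2) ^ 2]) := by
  rw [Matrix.isUnit_iff_isUnit_det, isUnit_iff_ne_zero]
  have hk' : (7 : ℚ) ≤ (k : ℚ) := by exact_mod_cast hk
  have hdet :
      (!![-(k : ℚ) * (k - 2), -(k : ℚ) * (k - 1), -2 * ((k : ℚ) - 1) ^ 2,
            -(2 * (k : ℚ) - 1) * (k - 2);
          ((k : ℚ) - 2) ^ 2, 2 * ((k : ℚ) - 1) ^ 2, -2 * ((k : ℚ) - 1) ^ 3,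
            -(2 * (k : ℚ) - 1) * (k - 2) ^ 2;
          -(k : ℚ) * (k - 2), -(k : ℚ) * (k - 1), 2 * ((k : ℚ) - 1) ^ 2,
            (2 * (k : ℚ) - 1) * (k - 2);
          ((k : ℚ) - 2) ^ 2, 2 * ((k : ℚ) - 1) ^ 2, 2 * ((k : ℚ) - 1) ^ 3,
            (2 * (k : ℚ) - 1) * (k - 2) ^ 2]).det
        = 8 * (k:ℚ)^2 * ((k:ℚ)-1)^3 * ((k:ℚ)-2)^2 * (2*(k:ℚ)-1) := by
    simp [Matrix.det_succ_row_zero, Fin.sum_univ_succ, Fin.succAbove,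
      Fin.castSucc, Fin.castAdd, Fin.castLE]
    ring
  rw [hdet]
  have h1 : (0:ℚ) < (k:ℚ) := by linarith
  have h2 : (0:ℚ) < (k:ℚ) - 1 := by linarith
  have h3 : (0:ℚ) < (k:ℚ) - 2 := by linarith
  have h4 : (0:ℚ) < 2*(k:ℚ) - 1 := by linarith
  positivity
end

section
/- For every integer k ≥ 6, the 4×4 rational matrix with rows (−(k+1)(k−1), −(k+1)(k−2), −(k−2), −(k−1)), (−(k²−2k−1), −(k²−4k−2), −(2k−2), −(2k−1)), ((k+1)(k−1), (k+1)(k−2), −(k−2), −(k−1)), ((k²−2k−1), (k²−4k−2), −(2k−2), −(2k−1)) is invertible. -/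
/-- For every integer `k ≥ 6`, the 4×4 rational matrix appearing in
the inductive step for odd genus `g = 2k+1` is invertible. -/
theorem odd_case_four_by_four_isUnit (k : ℤ) (hk : 6 ≤ k) :
    IsUnit
      (!![-((k : ℚ) + 1) * (k - 1), -((k : ℚ) + 1) * (k - 2), -((k : ℚ) - 2),
            -((k : ℚ) - 1);
          -((k : ℚ) ^ 2 - 2 * k - 1), -((k : ℚ) ^ 2 - 4 * k - 2), -(2 * (k : ℚ) - 2),
            -(2 * (k : ℚ) - 1);
          ((k : ℚ) + 1) * (k - 1), ((k : ℚ) + 1) * (k - 2), -((k : ℚ) - 2),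
            -((k : ℚ) - 1);
          ((k : ℚ) ^ 2 - 2 * k - 1), ((k : ℚ) ^ 2 - 4 * k - 2), -(2 * (k : ℚ) - 2),
            -(2 * (k : ℚ) - 1)]) := by
  rw [Matrix.isUnit_iff_isUnit_det, isUnit_iff_ne_zero]
  simp [Matrix.det_succ_row_zero, Fin.sum_univ_succ, Matrix.det_fin_three, Fin.succAbove, Fin.castSucc, Fin.castAdd, Fin.castLE]
  have hq : (6 : ℚ) ≤ (k : ℚ) := by exact_mod_cast hk
  intro h
  have : (4 : ℚ) * (k : ℚ) ^ 2 * ((k : ℚ) + 1) ^ 2 = 0 := by linear_combination h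
  nlinarith [sq_nonneg ((k : ℚ) + 1), sq_nonneg (k : ℚ)]
end

section
/- Let g = 2k+1 ≥ 13 be odd and let a be a complex number with a ≠ 0 and a ≠ 1. With the parameter choice a_{i,1} = i·a and a_{i,2} = i for i = 1, …, g−1 (so A_2 = (g−1)!), the torsion value at the node P_{k+1} satisfies τ_{k−1,k+2,k+1} = (−4(k+1)(k+2) a^{g−2} / A_2) · ∏_{ℓ=1, ℓ∉{k−1,k+1,k+2}}^{g−1} (k+1 − ℓ)², and in particular τ_{k−1,k+2,k+1} ≠ 0. -/
open Polynomial Finset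

/-- The parameter choice `a_{i,1} = i·a`, `a_{i,2} = i`. -/
noncomputable def aAP (a : ℂ) : ℕ → ℕ → ℂ := fun i h =>
  if h = 1 then (i : ℂ) * a else (i : ℂ)

lemma eval_deriv_prod' (s : Finset ℕ) (v : ℕ → ℂ) {m : ℕ} (hm : m ∈ s) :
    (derivative (∏ r ∈ s, (X - C (v r)))).eval (v m) = ∏ r ∈ s.erase m, (v m - v r) := by
  have h := Lagrange.eval_nodal_derivative_eval_node_eq (s := s) (v := v) hm
  rw [Lagrange.nodal] at h
  rw [h, Lagrange.eval_nodal]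

/-- Let `g = 2k+1 ≥ 13` be odd and `a ∈ ℂ`, `a ≠ 0`, `a ≠ 1`. With
`a_{i,1} = i·a`, `a_{i,2} = i` (so `A_2 = (g−1)!`), the torsion value at the node
`P_{k+1}` satisfies
`τ_{k−1,k+2,k+1} = (−4(k+1)(k+2)a^{g−2}/A_2) · ∏_{ℓ≠k−1,k+1,k+2}(k+1 − ℓ)²`, and in
particular `τ_{k−1,k+2,k+1} ≠ 0`. -/
theorem tauVal_odd_node (g k : ℕ) (hgk : g = 2 * k + 1) (hg : 13 ≤ g)
    (a : ℂ) (ha0 : a ≠ 0) (ha1 : a ≠ 1) :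
    tauVal g (aAP a) (k - 1) (k + 2) (k + 1) =
      -4 * ((k : ℂ) + 1) * ((k : ℂ) + 2) * a ^ (g - 2) / (Nat.factorial (g - 1) : ℂ) *
        ∏ ℓ ∈ (((Finset.Icc 1 (g - 1)).erase (k - 1)).erase (k + 1)).erase (k + 2),
          ((k : ℂ) + 1 - (ℓ : ℂ)) ^ 2 ∧
    tauVal g (aAP a) (k - 1) (k + 2) (k + 1) ≠ 0 := by
  have hk : 6 ≤ k := by omega
  set S := Finset.Icc 1 (g - 1) with hS
  have hmS : k + 1 ∈ S := by rw [hS]; simp only [Finset.mem_Icc]; omega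
  have hiS : k - 1 ∈ S := by rw [hS]; simp only [Finset.mem_Icc]; omega
  have hjS : k + 2 ∈ S := by rw [hS]; simp only [Finset.mem_Icc]; omega
  -- evaluation of derivative of alphaPoly for index i = k-1 (the "low" case)
  have evI : ∀ h : ℕ, (derivative (alphaPoly g (aAP a) (k - 1) h)).eval (aAP a (k + 1) h)
      = aAP a (k + 1) h *
        ∏ r ∈ (S.erase (k - 1)).erase (k + 1), (aAP a (k + 1) h - aAP a r h) := by
    intro h
    have hle : k - 1 ≤ g / 2 := by omega
    have hmem : k + 1 ∈ S.erase (k - 1) := Finset.mem_erase.mpr ⟨by omega, hmS⟩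
    rw [alphaPoly, if_pos hle, ← hS, derivative_mul, derivative_X, one_mul]
    rw [eval_add, eval_mul, eval_X]
    have hzero : eval (aAP a (k + 1) h) (∏ r ∈ S.erase (k - 1), (X - C (aAP a r h))) = 0 := by
      rw [eval_prod]
      exact Finset.prod_eq_zero hmem (by simp)
    rw [hzero, zero_add, eval_deriv_prod' _ (fun r => aAP a r h) hmem]
  -- evaluation for index j = k+2 (the "high" case)
  have evJ : ∀ h : ℕ, (derivative (alphaPoly g (aAP a) (k + 2) h)).eval (aAP a (k + 1) h)
      = -(dcoef g (aAP a) h * aAP a (k + 2) h / Aprod g (aAP a) h) *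
        ∏ r ∈ (S.erase (k + 2)).erase (k + 1), (aAP a (k + 1) h - aAP a r h) := by
    intro h
    have hle : ¬ k + 2 ≤ g / 2 := by omega
    have hmem : k + 1 ∈ S.erase (k + 2) := Finset.mem_erase.mpr ⟨by omega, hmS⟩
    rw [alphaPoly, if_neg hle, ← hS, derivative_C_mul, eval_mul, eval_C,
      eval_deriv_prod' _ (fun r => aAP a r h) hmem]
  -- the set T
  set T := ((S.erase (k - 1)).erase (k + 1)).erase (k + 2) with hT
  have hjT : k + 2 ∈ (S.erase (k - 1)).erase (k + 1) :=
    Finset.mem_erase.mpr ⟨by omega, Finset.mem_erase.mpr ⟨by omega, hjS⟩⟩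
  have hiT : k - 1 ∈ (S.erase (k + 2)).erase (k + 1) :=
    Finset.mem_erase.mpr ⟨by omega, Finset.mem_erase.mpr ⟨by omega, hiS⟩⟩
  have hIns1 : (S.erase (k - 1)).erase (k + 1) = insert (k + 2) T :=
    (Finset.insert_erase hjT).symm
  have hTalt : T = ((S.erase (k + 2)).erase (k + 1)).erase (k - 1) := by
    rw [hT]; ext x
    simp only [Finset.mem_erase]
    tauto
  have hIns2 : (S.erase (k + 2)).erase (k + 1) = insert (k - 1) T := by
    rw [hTalt]; exact (Finset.insert_erase hiT).symm
  have hjnT : k + 2 ∉ T := Finset.notMem_erase _ _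
  have hinT : k - 1 ∉ T := by rw [hTalt]; exact Finset.notMem_erase _ _
  -- cardinalities
  have hcS : S.card = g - 1 := by rw [hS, Nat.card_Icc]; omega
  have hcT : T.card = g - 4 := by
    rw [hT, Finset.card_erase_of_mem hjT,
      Finset.card_erase_of_mem (Finset.mem_erase.mpr ⟨by omega, hmS⟩),
      Finset.card_erase_of_mem hiS, hcS]
    omega
  -- the core product P over T
  set P := ∏ r ∈ T, ((k : ℂ) + 1 - (r : ℂ)) with hP
  have hcast1 : ((k - 1 : ℕ) : ℂ) = (k : ℂ) - 1 := by
    have h1 : (1 : ℕ) ≤ k := by omega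
    push_cast [h1]; ring
  -- pure products over the two index sets
  have prodNi : ∏ r ∈ (S.erase (k - 1)).erase (k + 1), ((k : ℂ) + 1 - (r : ℂ)) = -P := by
    rw [hIns1, Finset.prod_insert hjnT]
    push_cast
    rw [show ((k : ℂ) + 1 - ((k : ℂ) + 2)) = -1 by ring, hP]; ring
  have prodNj : ∏ r ∈ (S.erase (k + 2)).erase (k + 1), ((k : ℂ) + 1 - (r : ℂ)) = 2 * P := by
    rw [hIns2, Finset.prod_insert hinT, hcast1]
    rw [show ((k : ℂ) + 1 - ((k : ℂ) - 1)) = 2 by ring, hP]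
  -- specializations for h = 2
  have prod2i : ∏ r ∈ (S.erase (k - 1)).erase (k + 1), (aAP a (k + 1) 2 - aAP a r 2)
      = -P := by
    rw [← prodNi]
    refine Finset.prod_congr rfl fun r _ => ?_
    simp only [aAP, if_neg (by norm_num : (2:ℕ) ≠ 1)]
    push_cast; ring
  have prod2j : ∏ r ∈ (S.erase (k + 2)).erase (k + 1), (aAP a (k + 1) 2 - aAP a r 2)
      = 2 * P := by
    rw [← prodNj]
    refine Finset.prod_congr rfl fun r _ => ?_
    simp only [aAP, if_neg (by norm_num : (2:ℕ) ≠ 1)]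
    push_cast; ring
  -- specializations for h = 1
  have prodfac : ∀ (s : Finset ℕ), ∏ r ∈ s, (aAP a (k + 1) 1 - aAP a r 1)
      = (∏ r ∈ s, ((k : ℂ) + 1 - (r : ℂ))) * a ^ s.card := by
    intro s
    rw [← Finset.prod_const, ← Finset.prod_mul_distrib]
    refine Finset.prod_congr rfl fun r _ => ?_
    simp only [aAP, if_pos rfl]
    push_cast; ring
  have hc1 : ((S.erase (k - 1)).erase (k + 1)).card = g - 3 := by
    rw [hIns1, Finset.card_insert_of_notMem hjnT, hcT]; omega
  have hc2 : ((S.erase (k + 2)).erase (k + 1)).card = g - 3 := by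
    rw [hIns2, Finset.card_insert_of_notMem hinT, hcT]; omega
  have prod1i : ∏ r ∈ (S.erase (k - 1)).erase (k + 1), (aAP a (k + 1) 1 - aAP a r 1)
      = -P * a ^ (g - 3) := by rw [prodfac, prodNi, hc1]
  have prod1j : ∏ r ∈ (S.erase (k + 2)).erase (k + 1), (aAP a (k + 1) 1 - aAP a r 1)
      = 2 * P * a ^ (g - 3) := by rw [prodfac, prodNj, hc2]
  -- Aprod values
  set N := (Nat.factorial (g - 1) : ℂ) with hN
  have hN0 : N ≠ 0 := Nat.cast_ne_zero.mpr (Nat.factorial_ne_zero _)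
  have hA2 : Aprod g (aAP a) 2 = N := by
    rw [Aprod, hN]
    simp only [aAP, if_neg (by norm_num : (2:ℕ) ≠ 1)]
    rw [← Nat.cast_prod]
    congr 1
    rw [← Finset.Ico_add_one_right_eq_Icc]
    exact Finset.prod_Ico_id_eq_factorial _
  have haeq1 : ∀ x : ℕ, aAP a x 1 = (x : ℂ) * a := fun x => by simp [aAP]
  have haeq2 : ∀ x : ℕ, aAP a x 2 = (x : ℂ) := fun x => by simp [aAP]
  have hA1 : Aprod g (aAP a) 1 = N * a ^ (g - 1) := by
    rw [Aprod]
    simp only [haeq1]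
    rw [Finset.prod_mul_distrib, Finset.prod_const, ← hS, hcS, ← hA2, Aprod]
    simp only [haeq2]
    rw [hS]
  have hA10 : Aprod g (aAP a) 1 ≠ 0 := by
    rw [hA1]; exact mul_ne_zero hN0 (pow_ne_zero _ ha0)
  -- dcoef values
  have hd1 : dcoef g (aAP a) 1 = -(N * a ^ (g - 1)) / N := by
    rw [dcoef, if_pos rfl, hA1, hA2]
  have hd2 : dcoef g (aAP a) 2 = 1 := by rw [dcoef]; norm_num
  -- aAP values at the special points
  have haM1 : aAP a (k + 1) 1 = ((k : ℂ) + 1) * a := by rw [haeq1]; push_cast; ring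
  have haJ1 : aAP a (k + 2) 1 = ((k : ℂ) + 2) * a := by rw [haeq1]; push_cast; ring
  have haM2 : aAP a (k + 1) 2 = (k : ℂ) + 1 := by rw [haeq2]; push_cast; ring
  have haJ2 : aAP a (k + 2) 2 = (k : ℂ) + 2 := by rw [haeq2]; push_cast; ring
  -- unfold tauVal
  have hle : k + 1 ≤ g := by omega
  have hne : ¬ (k + 1 = g) := by omega
  have hc1' : -(dcoef g (aAP a) 1 * aAP a (k + 2) 1 / Aprod g (aAP a) 1)
      = ((k : ℂ) + 2) * a / N := by
    rw [hd1, hA1, haJ1]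
    have hpow : a ^ (g - 1) ≠ 0 := pow_ne_zero _ ha0
    field_simp
  have hc2' : -(dcoef g (aAP a) 2 * aAP a (k + 2) 2 / Aprod g (aAP a) 2)
      = -(((k : ℂ) + 2) / N) := by
    rw [hd2, hA2, haJ2, one_mul]
  have key : tauVal g (aAP a) (k - 1) (k + 2) (k + 1)
      = -4 * ((k : ℂ) + 1) * ((k : ℂ) + 2) * a ^ (g - 2) / N * P ^ 2 := by
    rw [tauVal, if_pos hle]
    simp only [if_neg hne]
    rw [evI 1, evI 2, evJ 1, evJ 2, prod1i, prod1j, prod2i, prod2j, hc1', hc2',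
      haM1, haM2]
    obtain ⟨e, he2, he3⟩ : ∃ e, g - 2 = e + 1 ∧ g - 3 = e := ⟨g - 3, by omega, rfl⟩
    rw [he2, he3, pow_succ]
    field_simp
    ring
  refine ⟨?_, ?_⟩
  · rw [key, Finset.prod_pow, ← hP]
  · rw [key]
    have hk1 : ((k : ℂ) + 1) ≠ 0 := by
      have := Nat.cast_add_one_ne_zero (R := ℂ) k; simpa using this
    have hk2 : ((k : ℂ) + 2) ≠ 0 := by
      have : ((k + 2 : ℕ) : ℂ) ≠ 0 := Nat.cast_ne_zero.mpr (by omega)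
      push_cast at this; exact this
    have hP0 : P ≠ 0 := by
      rw [hP]
      refine Finset.prod_ne_zero_iff.mpr fun r hr => ?_
      have hrne : r ≠ k + 1 := by
        rw [hT] at hr
        have := Finset.mem_erase.mp (Finset.mem_of_mem_erase hr)
        exact this.1
      intro hzero
      apply hrne
      have : ((k + 1 : ℕ) : ℂ) = (r : ℂ) := by push_cast; linear_combination hzero
      exact (Nat.cast_injective this).symm
    apply mul_ne_zero
    · apply div_ne_zero _ hN0
      apply mul_ne_zero (mul_ne_zero (mul_ne_zero (by norm_num) hk1) hk2)
      exact pow_ne_zero _ ha0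
    · exact pow_ne_zero _ hP0
end

section
/- Let g = 2k with k ≥ 7, and let a be a complex number with a ≠ 0 and a ≠ 1. With the parameter choice a_{i,1} = i·a and a_{i,2} = i for i = 1, …, g−1, the 5×5 complex matrix whose columns are indexed by the pairs (i,j) ∈ {(1,k), (2,k), (k,g−2), (k,g−1), (k−1,k+1)} and whose rows consist of the five quantities ν_{ij,1}(a_{k,1}), ν'_{ij,1}(a_{k,1}), ν_{ij,2}(a_{k,2}), ν'_{ij,2}(a_{k,2}), τ_{ij,k} is invertible. -/
open Polynomial Finset

section PolyAux

lemma deriv_lin_mul (t : ℂ) (q : ℂ[X]) :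
    derivative ((X - C t) * q) = q + (X - C t) * derivative q := by
  simp [derivative_mul]

lemma eval_deriv_lin_mul (t : ℂ) (q : ℂ[X]) :
    (derivative ((X - C t) * q)).eval t = q.eval t := by
  rw [deriv_lin_mul]; simp

lemma eval_deriv2_lin_mul (t : ℂ) (q : ℂ[X]) :
    (derivative (derivative ((X - C t) * q))).eval t = 2 * (derivative q).eval t := by
  rw [deriv_lin_mul, derivative_add, deriv_lin_mul]
  simp; ring

lemma derivative_wronskian (p q : ℂ[X]) :
    derivative (p * derivative q - q * derivative p)
      = p * derivative (derivative q) - q * derivative (derivative p) := by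
  simp only [derivative_sub, derivative_mul]; ring

lemma wronskian_pair_eval (t b₁ b₂ c₁ c₂ : ℂ) (w : ℂ[X]) :
    (C c₁ * ((X - C b₁) * w)).eval t * (derivative (C c₂ * ((X - C b₂) * w))).eval t
      - (C c₂ * ((X - C b₂) * w)).eval t * (derivative (C c₁ * ((X - C b₁) * w))).eval t
      = c₁ * c₂ * (b₂ - b₁) * (w.eval t) ^ 2 := by
  simp only [derivative_mul, derivative_C, derivative_sub, derivative_X, sub_zero,
    zero_mul, zero_add, eval_mul, eval_add, eval_sub, eval_C, eval_X, eval_one]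
  ring

lemma linear_prod_comp (a : ℂ) (s : Finset ℕ) (f : ℕ → ℂ) :
    (∏ r ∈ s, (X - C (f r * a))).comp (C a * X)
      = C (a ^ s.card) * ∏ r ∈ s, (X - C (f r)) := by
  rw [Polynomial.prod_comp]
  have h : ∀ r ∈ s, (X - C (f r * a)).comp (C a * X) = C a * (X - C (f r)) := by
    intro r _
    simp only [sub_comp, X_comp, C_comp]
    ring_nf
    rw [mul_comm, C_mul]
    ring
  rw [Finset.prod_congr rfl h, Finset.prod_mul_distrib, Finset.prod_const, ← C_pow]

lemma nu_eval_left (t : ℂ) (p₀ B : ℂ[X]) :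
    ((X - C t) * p₀ * derivative B - B * derivative ((X - C t) * p₀)).eval t
      = -(B.eval t * p₀.eval t) := by
  simp [eval_deriv_lin_mul]

lemma nu_deriv_eval_left (t : ℂ) (p₀ B : ℂ[X]) :
    (derivative ((X - C t) * p₀ * derivative B - B * derivative ((X - C t) * p₀))).eval t
      = -(B.eval t * (2 * (derivative p₀).eval t)) := by
  rw [derivative_wronskian]
  simp only [eval_sub, eval_mul, eval_X, eval_C, sub_self, zero_mul, eval_deriv2_lin_mul]
  ring

lemma nu_eval_right (t : ℂ) (q₀ B : ℂ[X]) :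
    (B * derivative ((X - C t) * q₀) - (X - C t) * q₀ * derivative B).eval t
      = B.eval t * q₀.eval t := by
  simp [eval_deriv_lin_mul]

lemma nu_deriv_eval_right (t : ℂ) (q₀ B : ℂ[X]) :
    (derivative (B * derivative ((X - C t) * q₀) - (X - C t) * q₀ * derivative B)).eval t
      = B.eval t * (2 * (derivative q₀).eval t) := by
  rw [derivative_wronskian]
  simp only [eval_sub, eval_mul, eval_X, eval_C, sub_self, zero_mul, eval_deriv2_lin_mul]
  ring

lemma nu_eval_both (t : ℂ) (p₀ q₀ : ℂ[X]) :
    ((X - C t) * p₀ * derivative ((X - C t) * q₀)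
      - (X - C t) * q₀ * derivative ((X - C t) * p₀)).eval t = 0 := by
  simp

lemma nu_deriv_eval_both (t : ℂ) (p₀ q₀ : ℂ[X]) :
    (derivative ((X - C t) * p₀ * derivative ((X - C t) * q₀)
      - (X - C t) * q₀ * derivative ((X - C t) * p₀))).eval t = 0 := by
  rw [derivative_wronskian]
  simp

end PolyAux

noncomputable def qPoly (g : ℕ) (a : ℕ → ℕ → ℂ) (i h : ℕ) : Polynomial ℂ :=
  if i ≤ g / 2 then
    X * ∏ r ∈ ((Finset.Icc 1 (g - 1)).erase i).erase (g / 2), (X - C (a r h))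
  else
    C (-(dcoef g a h * a i h / Aprod g a h)) *
      ∏ r ∈ ((Finset.Icc 1 (g - 1)).erase i).erase (g / 2), (X - C (a r h))

lemma alpha_factor (g kk : ℕ) (b : ℕ → ℕ → ℂ) (i h : ℕ) (h2 : g / 2 = kk)
    (hkk : kk ∈ Finset.Icc 1 (g - 1)) (hik : kk ≠ i) :
    alphaPoly g b i h = (X - C (b kk h)) * qPoly g b i h := by
  have hmem : kk ∈ (Finset.Icc 1 (g - 1)).erase i := Finset.mem_erase.2 ⟨hik, hkk⟩
  rw [alphaPoly, qPoly, h2, ← Finset.mul_prod_erase _ _ hmem]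
  split_ifs with hle <;> ring

lemma qPoly_factor_low (g kk : ℕ) (b : ℕ → ℕ → ℂ) (i j h : ℕ) (h2 : g / 2 = kk)
    (hi : i ≤ kk) (hj : j ∈ Finset.Icc 1 (g - 1)) (hjk : j ≠ kk) (hji : j ≠ i) :
    qPoly g b i h = C 1 * ((X - C (b j h)) *
      (X * ∏ r ∈ (((Finset.Icc 1 (g - 1)).erase i).erase kk).erase j, (X - C (b r h)))) := by
  have hmem : j ∈ ((Finset.Icc 1 (g - 1)).erase i).erase kk :=
    Finset.mem_erase.2 ⟨hjk, Finset.mem_erase.2 ⟨hji, hj⟩⟩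
  rw [qPoly, h2, if_pos hi, ← Finset.mul_prod_erase _ _ hmem, C_1]
  ring

lemma qPoly_factor_high (g kk : ℕ) (b : ℕ → ℕ → ℂ) (i j h : ℕ) (h2 : g / 2 = kk)
    (hi : ¬ i ≤ kk) (hj : j ∈ Finset.Icc 1 (g - 1)) (hjk : j ≠ kk) (hji : j ≠ i) :
    qPoly g b i h = C (-(dcoef g b h * b i h / Aprod g b h)) * ((X - C (b j h)) *
      ∏ r ∈ (((Finset.Icc 1 (g - 1)).erase i).erase kk).erase j, (X - C (b r h))) := by
  have hmem : j ∈ ((Finset.Icc 1 (g - 1)).erase i).erase kk :=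
    Finset.mem_erase.2 ⟨hjk, Finset.mem_erase.2 ⟨hji, hj⟩⟩
  rw [qPoly, h2, if_neg hi, ← Finset.mul_prod_erase _ _ hmem]

lemma aAP_one (a : ℂ) (i : ℕ) : aAP a i 1 = (i : ℂ) * a := rfl

lemma aAP_two (a : ℂ) (i : ℕ) : aAP a i 2 = (i : ℂ) := rfl

lemma Aprod_two_ne (g : ℕ) (a : ℂ) : Aprod g (aAP a) 2 ≠ 0 := by
  rw [Aprod]
  refine Finset.prod_ne_zero_iff.2 fun r hr => ?_
  rw [aAP_two]
  exact_mod_cast Nat.cast_ne_zero.2 (by have := (Finset.mem_Icc.1 hr).1; omega)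

lemma Aprod_one_eq (g : ℕ) (a : ℂ) :
    Aprod g (aAP a) 1 = a ^ (g - 1) * Aprod g (aAP a) 2 := by
  rw [Aprod, Aprod]
  simp only [aAP_one, aAP_two]
  rw [Finset.prod_mul_distrib, Finset.prod_const, Nat.card_Icc]
  simp [mul_comm]

lemma dcoef_one_eq (g : ℕ) (a : ℂ) : dcoef g (aAP a) 1 = -a ^ (g - 1) := by
  rw [dcoef, if_pos rfl, Aprod_one_eq, neg_div, mul_div_assoc,
    div_self (Aprod_two_ne g a), mul_one]

lemma qPoly_scale (g kk : ℕ) (h2 : g / 2 = kk) (a : ℂ) (ha : a ≠ 0)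
    (i : ℕ) (hi : i ∈ Finset.Icc 1 (g - 1)) (hik : i ≠ kk)
    (hkk : kk ∈ Finset.Icc 1 (g - 1)) :
    (qPoly g (aAP a) i 1).comp (C a * X)
      = C ((if i ≤ kk then 1 else -1) * a ^ (g - 2)) * qPoly g (aAP a) i 2 := by
  have hkmem : kk ∈ (Finset.Icc 1 (g - 1)).erase i :=
    Finset.mem_erase.2 ⟨fun hh => hik hh.symm, hkk⟩
  have hEcard : ((((Finset.Icc 1 (g - 1)).erase i).erase kk)).card = g - 3 := by
    rw [Finset.card_erase_of_mem hkmem, Finset.card_erase_of_mem hi, Nat.card_Icc]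
    have h1 : 1 ≤ kk := (Finset.mem_Icc.1 hkk).1
    have h3 : kk ≤ g - 1 := (Finset.mem_Icc.1 hkk).2
    have h4 : 1 ≤ i := (Finset.mem_Icc.1 hi).1
    omega
  have hg3 : 3 ≤ g := by
    have h1 : 1 ≤ kk := (Finset.mem_Icc.1 hkk).1
    have h3 : kk ≤ g - 1 := (Finset.mem_Icc.1 hkk).2
    have h4 : 1 ≤ i := (Finset.mem_Icc.1 hi).1
    have h5 : i ≤ g - 1 := (Finset.mem_Icc.1 hi).2
    rcases Nat.lt_or_ge g 3 with hg | hg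
    · interval_cases g <;> omega
    · exact hg
  have hprod : (∏ r ∈ ((Finset.Icc 1 (g - 1)).erase i).erase kk, (X - C (aAP a r 1))).comp
      (C a * X) = C (a ^ (g - 3)) *
        ∏ r ∈ ((Finset.Icc 1 (g - 1)).erase i).erase kk, (X - C (aAP a r 2)) := by
    have e1 : ∀ r ∈ ((Finset.Icc 1 (g - 1)).erase i).erase kk,
        (X - C (aAP a r 1)) = (X - C ((r : ℂ) * a)) := fun r _ => by rw [aAP_one]
    have e2 : ∀ r ∈ ((Finset.Icc 1 (g - 1)).erase i).erase kk,
        (X - C (aAP a r 2)) = (X - C ((r : ℂ))) := fun r _ => by rw [aAP_two]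
    rw [Finset.prod_congr rfl e1, Finset.prod_congr rfl e2,
      linear_prod_comp a _ (fun r => (r : ℂ)), hEcard]
  obtain ⟨m, rfl⟩ : ∃ m, g = m + 3 := ⟨g - 3, by omega⟩
  have hm2 : m + 3 - 2 = m + 1 := by omega
  have hm3 : m + 3 - 3 = m := by omega
  have hm1 : m + 3 - 1 = m + 2 := by omega
  rw [qPoly, qPoly, h2]
  split_ifs with hle
  · rw [mul_comp, X_comp, hprod, hm2, hm3, one_mul, pow_succ, C_mul]
    ring
  · rw [mul_comp, C_comp, hprod, hm2, hm3]
    have hc : (-(dcoef (m + 3) (aAP a) 1 * aAP a i 1 / Aprod (m + 3) (aAP a) 1)) * a ^ m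
        = (-1 * a ^ (m + 1)) * (-(dcoef (m + 3) (aAP a) 2 * aAP a i 2 / Aprod (m + 3) (aAP a) 2)) := by
      rw [dcoef_one_eq, Aprod_one_eq, aAP_one, aAP_two, hm1]
      rw [show dcoef (m + 3) (aAP a) 2 = 1 from by rw [dcoef]; norm_num]
      have hA := Aprod_two_ne (m + 3) a
      field_simp
      ring
    rw [← mul_assoc, ← C_mul, hc, C_mul]
    ring

lemma eval_lin_prod_ne (kk : ℕ) (a : ℂ) (E : Finset ℕ) (hE : kk ∉ E) :
    (∏ r ∈ E, (X - C (aAP a r 2))).eval ((kk : ℂ)) ≠ 0 := by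
  simp only [eval_prod, eval_sub, eval_X, eval_C, aAP_two]
  refine Finset.prod_ne_zero_iff.2 fun r hr => sub_ne_zero.2 fun hh => ?_
  have : kk = r := by exact_mod_cast hh
  exact hE (this ▸ hr)

lemma eval_q_low_ne (g kk i : ℕ) (a : ℂ) (h2 : g / 2 = kk) (hi : i ≤ kk) (hk0 : kk ≠ 0) :
    (qPoly g (aAP a) i 2).eval ((kk : ℂ)) ≠ 0 := by
  rw [qPoly, h2, if_pos hi, eval_mul, eval_X]
  refine mul_ne_zero (Nat.cast_ne_zero.2 hk0) (eval_lin_prod_ne kk a _ ?_)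
  simp

lemma dcoef_two_eq (g : ℕ) (a : ℂ) : dcoef g (aAP a) 2 = 1 := by
  rw [dcoef]; norm_num

lemma chigh_ne (g i : ℕ) (a : ℂ) (hi : i ≠ 0) :
    -(dcoef g (aAP a) 2 * aAP a i 2 / Aprod g (aAP a) 2) ≠ 0 := by
  rw [dcoef_two_eq, one_mul, aAP_two]
  exact neg_ne_zero.2 (div_ne_zero (Nat.cast_ne_zero.2 hi) (Aprod_two_ne g a))

lemma eval_q_high_ne (g kk i : ℕ) (a : ℂ) (h2 : g / 2 = kk) (hi : ¬ i ≤ kk)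
    (hi0 : i ≠ 0) (hk0 : kk ≠ 0) :
    (qPoly g (aAP a) i 2).eval ((kk : ℂ)) ≠ 0 := by
  rw [qPoly, h2, if_neg hi, eval_mul, eval_C]
  refine mul_ne_zero (chigh_ne g i a hi0) (eval_lin_prod_ne kk a _ ?_)
  simp

lemma alphaK_one_ne (g kk : ℕ) (a : ℂ) (ha : a ≠ 0) (h2 : g / 2 = kk) (hk0 : kk ≠ 0) :
    (alphaPoly g (aAP a) kk 1).eval ((kk : ℂ) * a) ≠ 0 := by
  rw [alphaPoly, if_pos (le_of_eq h2.symm), eval_mul, eval_X]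
  refine mul_ne_zero (mul_ne_zero (Nat.cast_ne_zero.2 hk0) ha) ?_
  simp only [eval_prod, eval_sub, eval_X, eval_C, aAP_one]
  refine Finset.prod_ne_zero_iff.2 fun r hr => fun hh => ?_
  have hrk : r ≠ kk := (Finset.mem_erase.1 hr).1
  have hz : ((kk : ℂ) - (r : ℂ)) * a = 0 := by linear_combination hh
  rcases mul_eq_zero.1 hz with h' | h'
  · exact hrk (by exact_mod_cast (sub_eq_zero.1 h').symm)
  · exact ha h'

lemma alphaK_two_ne (g kk : ℕ) (a : ℂ) (h2 : g / 2 = kk) (hk0 : kk ≠ 0) :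
    (alphaPoly g (aAP a) kk 2).eval ((kk : ℂ)) ≠ 0 := by
  rw [alphaPoly, if_pos (le_of_eq h2.symm), eval_mul, eval_X]
  exact mul_ne_zero (Nat.cast_ne_zero.2 hk0) (eval_lin_prod_ne kk a _ (by simp))


set_option maxHeartbeats 4000000 in
lemma det5aux (b A₁ A₂ u₁ u₂ u₃ u₄ v₁ v₂ v₃ v₄ s₁ s₂ s₃ s₄ τ : ℂ) :
    Matrix.det !![-(A₁ * (b * u₁)), -(A₁ * (b * u₂)), A₁ * -(b * u₃), A₁ * -(b * u₄), 0;
      -(2 * A₁ * (b * v₁)), -(2 * A₁ * (b * v₂)), -(2 * A₁ * (b * v₃)), -(2 * A₁ * (b * v₄)), 0;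
      -(A₂ * u₁), -(A₂ * u₂), A₂ * u₃, A₂ * u₄, 0;
      -(A₂ * (2 * v₁)), -(A₂ * (2 * v₂)), A₂ * (2 * v₃), A₂ * (2 * v₄), 0;
      s₁, s₂, s₃, s₄, τ]
    = τ * (16 * A₁ ^ 2 * A₂ ^ 2 * b ^ 2)
        * ((u₁ * v₂ - u₂ * v₁) * (u₃ * v₄ - u₄ * v₃)) := by
  simp [Matrix.det_succ_row_zero, Fin.sum_univ_succ, Fin.succAbove,
    Matrix.submatrix_apply]
  ring

set_option maxHeartbeats 4000000 in
lemma det5 (a b A₁ A₂ x₁ x₂ x₃ x₄ y₁ y₂ y₃ y₄ u₁ u₂ u₃ u₄ v₁ v₂ v₃ v₄ s₁ s₂ s₃ s₄ τ : ℂ)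
    (h1 : x₁ = b * u₁) (h2 : x₂ = b * u₂) (h3 : x₃ = -(b * u₃)) (h4 : x₄ = -(b * u₄))
    (h5 : a * y₁ = b * v₁) (h6 : a * y₂ = b * v₂)
    (h7 : a * y₃ = -(b * v₃)) (h8 : a * y₄ = -(b * v₄)) :
    a * Matrix.det !![-(A₁ * x₁), -(A₁ * x₂), A₁ * x₃, A₁ * x₄, 0;
      -(A₁ * (2 * y₁)), -(A₁ * (2 * y₂)), A₁ * (2 * y₃), A₁ * (2 * y₄), 0;
      -(A₂ * u₁), -(A₂ * u₂), A₂ * u₃, A₂ * u₄, 0;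
      -(A₂ * (2 * v₁)), -(A₂ * (2 * v₂)), A₂ * (2 * v₃), A₂ * (2 * v₄), 0;
      s₁, s₂, s₃, s₄, τ]
    = τ * (16 * A₁ ^ 2 * A₂ ^ 2 * b ^ 2)
        * ((u₁ * v₂ - u₂ * v₁) * (u₃ * v₄ - u₄ * v₃)) := by
  subst h1 h2 h3 h4
  have hupd : (!![-(A₁ * (b * u₁)), -(A₁ * (b * u₂)), A₁ * -(b * u₃), A₁ * -(b * u₄), 0;
      -(2 * A₁ * (b * v₁)), -(2 * A₁ * (b * v₂)), -(2 * A₁ * (b * v₃)), -(2 * A₁ * (b * v₄)), 0;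
      -(A₂ * u₁), -(A₂ * u₂), A₂ * u₃, A₂ * u₄, 0;
      -(A₂ * (2 * v₁)), -(A₂ * (2 * v₂)), A₂ * (2 * v₃), A₂ * (2 * v₄), 0;
      s₁, s₂, s₃, s₄, τ] : Matrix (Fin 5) (Fin 5) ℂ)
      = (!![-(A₁ * (b * u₁)), -(A₁ * (b * u₂)), A₁ * -(b * u₃), A₁ * -(b * u₄), 0;
      -(A₁ * (2 * y₁)), -(A₁ * (2 * y₂)), A₁ * (2 * y₃), A₁ * (2 * y₄), 0;
      -(A₂ * u₁), -(A₂ * u₂), A₂ * u₃, A₂ * u₄, 0;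
      -(A₂ * (2 * v₁)), -(A₂ * (2 * v₂)), A₂ * (2 * v₃), A₂ * (2 * v₄), 0;
      s₁, s₂, s₃, s₄, τ]).updateRow 1
        (a • ![-(A₁ * (2 * y₁)), -(A₁ * (2 * y₂)), A₁ * (2 * y₃), A₁ * (2 * y₄), 0]) := by
    ext i j
    fin_cases i <;> fin_cases j <;>
      simp [Matrix.updateRow_apply]
    · linear_combination -2 * A₁ * h5
    · linear_combination -2 * A₁ * h6
    · linear_combination -2 * A₁ * h7
    · linear_combination -2 * A₁ * h8
  have h2' : Matrix.det !![-(A₁ * (b * u₁)), -(A₁ * (b * u₂)), A₁ * -(b * u₃), A₁ * -(b * u₄), 0;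
      -(2 * A₁ * (b * v₁)), -(2 * A₁ * (b * v₂)), -(2 * A₁ * (b * v₃)), -(2 * A₁ * (b * v₄)), 0;
      -(A₂ * u₁), -(A₂ * u₂), A₂ * u₃, A₂ * u₄, 0;
      -(A₂ * (2 * v₁)), -(A₂ * (2 * v₂)), A₂ * (2 * v₃), A₂ * (2 * v₄), 0;
      s₁, s₂, s₃, s₄, τ]
      = a * Matrix.det !![-(A₁ * (b * u₁)), -(A₁ * (b * u₂)), A₁ * -(b * u₃), A₁ * -(b * u₄), 0;
      -(A₁ * (2 * y₁)), -(A₁ * (2 * y₂)), A₁ * (2 * y₃), A₁ * (2 * y₄), 0;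
      -(A₂ * u₁), -(A₂ * u₂), A₂ * u₃, A₂ * u₄, 0;
      -(A₂ * (2 * v₁)), -(A₂ * (2 * v₂)), A₂ * (2 * v₃), A₂ * (2 * v₄), 0;
      s₁, s₂, s₃, s₄, τ] := by
    rw [hupd, Matrix.det_updateRow_smul]
    congr 2
    ext i j
    fin_cases i <;> fin_cases j <;> simp [Matrix.updateRow_apply]
  rw [← h2', det5aux]

set_option maxHeartbeats 4000000 in
/-- Let `g = 2k` with `k ≥ 7`, and let `a ∈ ℂ`, `a ≠ 0`, `a ≠ 1`.
With `a_{i,1} = i·a`, `a_{i,2} = i`, the 5×5 matrix whose columns are indexed by the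
pairs `(1,k), (2,k), (k,g−2), (k,g−1), (k−1,k+1)` and whose rows are
`ν_{ij,1}(a_{k,1}), ν'_{ij,1}(a_{k,1}), ν_{ij,2}(a_{k,2}), ν'_{ij,2}(a_{k,2}), τ_{ij,k}`
is invertible. -/
theorem even_case_five_by_five_isUnit (g k : ℕ) (hgk : g = 2 * k) (hk : 7 ≤ k)
    (a : ℂ) (ha0 : a ≠ 0) (ha1 : a ≠ 1) :
    IsUnit (Matrix.of fun (r c : Fin 5) =>
      (fun (i j : ℕ) =>
        ![(nuPoly g (aAP a) i j 1).eval ((k : ℂ) * a),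
          (Polynomial.derivative (nuPoly g (aAP a) i j 1)).eval ((k : ℂ) * a),
          (nuPoly g (aAP a) i j 2).eval (k : ℂ),
          (Polynomial.derivative (nuPoly g (aAP a) i j 2)).eval (k : ℂ),
          tauVal g (aAP a) i j k] r)
      ((![(1, k), (2, k), (k, g - 2), (k, g - 1), (k - 1, k + 1)] : Fin 5 → ℕ × ℕ) c).1
      ((![(1, k), (2, k), (k, g - 2), (k, g - 1), (k - 1, k + 1)] : Fin 5 → ℕ × ℕ) c).2) := by
  have hg2 : g / 2 = k := by omega
  have hkmem : k ∈ Finset.Icc 1 (g - 1) := Finset.mem_Icc.2 ⟨by omega, by omega⟩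
  have hmem1 : 1 ∈ Finset.Icc 1 (g - 1) := Finset.mem_Icc.2 ⟨by omega, by omega⟩
  have hmem2 : 2 ∈ Finset.Icc 1 (g - 1) := Finset.mem_Icc.2 ⟨by omega, by omega⟩
  have hmem3 : (g - 2) ∈ Finset.Icc 1 (g - 1) := Finset.mem_Icc.2 ⟨by omega, by omega⟩
  have hmem4 : (g - 1) ∈ Finset.Icc 1 (g - 1) := Finset.mem_Icc.2 ⟨by omega, by omega⟩
  have hmem5 : (k - 1) ∈ Finset.Icc 1 (g - 1) := Finset.mem_Icc.2 ⟨by omega, by omega⟩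
  have hmem6 : (k + 1) ∈ Finset.Icc 1 (g - 1) := Finset.mem_Icc.2 ⟨by omega, by omega⟩
  have hp1 : aAP a k 1 = (k : ℂ) * a := rfl
  have hp2 : aAP a k 2 = (k : ℂ) := rfl
  have e00h1 : (nuPoly g (aAP a) 1 k 1).eval ((k : ℂ) * a) = -((alphaPoly g (aAP a) k 1).eval ((k : ℂ) * a) * (qPoly g (aAP a) 1 1).eval ((k : ℂ) * a)) := by
    rw [nuPoly, alpha_factor g k (aAP a) 1 1 hg2 hkmem (by omega), hp1]
    exact nu_eval_left _ _ _
  have e10h1 : (derivative (nuPoly g (aAP a) 1 k 1)).eval ((k : ℂ) * a) = -((alphaPoly g (aAP a) k 1).eval ((k : ℂ) * a) * (2 * (derivative (qPoly g (aAP a) 1 1)).eval ((k : ℂ) * a))) := by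
    rw [nuPoly, alpha_factor g k (aAP a) 1 1 hg2 hkmem (by omega), hp1]
    exact nu_deriv_eval_left _ _ _
  have e00h2 : (nuPoly g (aAP a) 1 k 2).eval ((k : ℂ)) = -((alphaPoly g (aAP a) k 2).eval ((k : ℂ)) * (qPoly g (aAP a) 1 2).eval ((k : ℂ))) := by
    rw [nuPoly, alpha_factor g k (aAP a) 1 2 hg2 hkmem (by omega), hp2]
    exact nu_eval_left _ _ _
  have e10h2 : (derivative (nuPoly g (aAP a) 1 k 2)).eval ((k : ℂ)) = -((alphaPoly g (aAP a) k 2).eval ((k : ℂ)) * (2 * (derivative (qPoly g (aAP a) 1 2)).eval ((k : ℂ)))) := by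
    rw [nuPoly, alpha_factor g k (aAP a) 1 2 hg2 hkmem (by omega), hp2]
    exact nu_deriv_eval_left _ _ _
  have e01h1 : (nuPoly g (aAP a) 2 k 1).eval ((k : ℂ) * a) = -((alphaPoly g (aAP a) k 1).eval ((k : ℂ) * a) * (qPoly g (aAP a) 2 1).eval ((k : ℂ) * a)) := by
    rw [nuPoly, alpha_factor g k (aAP a) 2 1 hg2 hkmem (by omega), hp1]
    exact nu_eval_left _ _ _
  have e11h1 : (derivative (nuPoly g (aAP a) 2 k 1)).eval ((k : ℂ) * a) = -((alphaPoly g (aAP a) k 1).eval ((k : ℂ) * a) * (2 * (derivative (qPoly g (aAP a) 2 1)).eval ((k : ℂ) * a))) := by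
    rw [nuPoly, alpha_factor g k (aAP a) 2 1 hg2 hkmem (by omega), hp1]
    exact nu_deriv_eval_left _ _ _
  have e01h2 : (nuPoly g (aAP a) 2 k 2).eval ((k : ℂ)) = -((alphaPoly g (aAP a) k 2).eval ((k : ℂ)) * (qPoly g (aAP a) 2 2).eval ((k : ℂ))) := by
    rw [nuPoly, alpha_factor g k (aAP a) 2 2 hg2 hkmem (by omega), hp2]
    exact nu_eval_left _ _ _
  have e11h2 : (derivative (nuPoly g (aAP a) 2 k 2)).eval ((k : ℂ)) = -((alphaPoly g (aAP a) k 2).eval ((k : ℂ)) * (2 * (derivative (qPoly g (aAP a) 2 2)).eval ((k : ℂ)))) := by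
    rw [nuPoly, alpha_factor g k (aAP a) 2 2 hg2 hkmem (by omega), hp2]
    exact nu_deriv_eval_left _ _ _
  have e02h1 : (nuPoly g (aAP a) k (g - 2) 1).eval ((k : ℂ) * a) = (alphaPoly g (aAP a) k 1).eval ((k : ℂ) * a) * (qPoly g (aAP a) (g - 2) 1).eval ((k : ℂ) * a) := by
    rw [nuPoly, alpha_factor g k (aAP a) (g - 2) 1 hg2 hkmem (by omega), hp1]
    exact nu_eval_right _ _ _
  have e12h1 : (derivative (nuPoly g (aAP a) k (g - 2) 1)).eval ((k : ℂ) * a) = (alphaPoly g (aAP a) k 1).eval ((k : ℂ) * a) * (2 * (derivative (qPoly g (aAP a) (g - 2) 1)).eval ((k : ℂ) * a)) := by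
    rw [nuPoly, alpha_factor g k (aAP a) (g - 2) 1 hg2 hkmem (by omega), hp1]
    exact nu_deriv_eval_right _ _ _
  have e02h2 : (nuPoly g (aAP a) k (g - 2) 2).eval ((k : ℂ)) = (alphaPoly g (aAP a) k 2).eval ((k : ℂ)) * (qPoly g (aAP a) (g - 2) 2).eval ((k : ℂ)) := by
    rw [nuPoly, alpha_factor g k (aAP a) (g - 2) 2 hg2 hkmem (by omega), hp2]
    exact nu_eval_right _ _ _
  have e12h2 : (derivative (nuPoly g (aAP a) k (g - 2) 2)).eval ((k : ℂ)) = (alphaPoly g (aAP a) k 2).eval ((k : ℂ)) * (2 * (derivative (qPoly g (aAP a) (g - 2) 2)).eval ((k : ℂ))) := by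
    rw [nuPoly, alpha_factor g k (aAP a) (g - 2) 2 hg2 hkmem (by omega), hp2]
    exact nu_deriv_eval_right _ _ _
  have e03h1 : (nuPoly g (aAP a) k (g - 1) 1).eval ((k : ℂ) * a) = (alphaPoly g (aAP a) k 1).eval ((k : ℂ) * a) * (qPoly g (aAP a) (g - 1) 1).eval ((k : ℂ) * a) := by
    rw [nuPoly, alpha_factor g k (aAP a) (g - 1) 1 hg2 hkmem (by omega), hp1]
    exact nu_eval_right _ _ _
  have e13h1 : (derivative (nuPoly g (aAP a) k (g - 1) 1)).eval ((k : ℂ) * a) = (alphaPoly g (aAP a) k 1).eval ((k : ℂ) * a) * (2 * (derivative (qPoly g (aAP a) (g - 1) 1)).eval ((k : ℂ) * a)) := by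
    rw [nuPoly, alpha_factor g k (aAP a) (g - 1) 1 hg2 hkmem (by omega), hp1]
    exact nu_deriv_eval_right _ _ _
  have e03h2 : (nuPoly g (aAP a) k (g - 1) 2).eval ((k : ℂ)) = (alphaPoly g (aAP a) k 2).eval ((k : ℂ)) * (qPoly g (aAP a) (g - 1) 2).eval ((k : ℂ)) := by
    rw [nuPoly, alpha_factor g k (aAP a) (g - 1) 2 hg2 hkmem (by omega), hp2]
    exact nu_eval_right _ _ _
  have e13h2 : (derivative (nuPoly g (aAP a) k (g - 1) 2)).eval ((k : ℂ)) = (alphaPoly g (aAP a) k 2).eval ((k : ℂ)) * (2 * (derivative (qPoly g (aAP a) (g - 1) 2)).eval ((k : ℂ))) := by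
    rw [nuPoly, alpha_factor g k (aAP a) (g - 1) 2 hg2 hkmem (by omega), hp2]
    exact nu_deriv_eval_right _ _ _
  have e04h1 : (nuPoly g (aAP a) (k - 1) (k + 1) 1).eval ((k : ℂ) * a) = 0 := by
    rw [nuPoly, alpha_factor g k (aAP a) (k - 1) 1 hg2 hkmem (by omega),
      alpha_factor g k (aAP a) (k + 1) 1 hg2 hkmem (by omega), hp1]
    exact nu_eval_both _ _ _
  have e14h1 : (derivative (nuPoly g (aAP a) (k - 1) (k + 1) 1)).eval ((k : ℂ) * a) = 0 := by
    rw [nuPoly, alpha_factor g k (aAP a) (k - 1) 1 hg2 hkmem (by omega),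
      alpha_factor g k (aAP a) (k + 1) 1 hg2 hkmem (by omega), hp1]
    exact nu_deriv_eval_both _ _ _
  have e04h2 : (nuPoly g (aAP a) (k - 1) (k + 1) 2).eval ((k : ℂ)) = 0 := by
    rw [nuPoly, alpha_factor g k (aAP a) (k - 1) 2 hg2 hkmem (by omega),
      alpha_factor g k (aAP a) (k + 1) 2 hg2 hkmem (by omega), hp2]
    exact nu_eval_both _ _ _
  have e14h2 : (derivative (nuPoly g (aAP a) (k - 1) (k + 1) 2)).eval ((k : ℂ)) = 0 := by
    rw [nuPoly, alpha_factor g k (aAP a) (k - 1) 2 hg2 hkmem (by omega),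
      alpha_factor g k (aAP a) (k + 1) 2 hg2 hkmem (by omega), hp2]
    exact nu_deriv_eval_both _ _ _
  have hs1 := qPoly_scale g k hg2 a ha0 1 hmem1 (by omega) hkmem
  rw [if_pos (by omega : 1 ≤ k), one_mul] at hs1
  have hx1 := congrArg (Polynomial.eval ((k : ℂ))) hs1
  simp only [eval_comp, eval_mul, eval_C, eval_X] at hx1
  rw [mul_comm a ((k : ℂ))] at hx1
  have hy1 := congrArg (fun p => (Polynomial.derivative p).eval ((k : ℂ))) hs1
  simp only [Polynomial.derivative_comp, derivative_mul, derivative_C, derivative_X,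
    zero_mul, mul_one, zero_add, eval_mul, eval_C, eval_comp, eval_X] at hy1
  rw [mul_comm a ((k : ℂ))] at hy1
  have hs2 := qPoly_scale g k hg2 a ha0 2 hmem2 (by omega) hkmem
  rw [if_pos (by omega : 2 ≤ k), one_mul] at hs2
  have hx2 := congrArg (Polynomial.eval ((k : ℂ))) hs2
  simp only [eval_comp, eval_mul, eval_C, eval_X] at hx2
  rw [mul_comm a ((k : ℂ))] at hx2
  have hy2 := congrArg (fun p => (Polynomial.derivative p).eval ((k : ℂ))) hs2
  simp only [Polynomial.derivative_comp, derivative_mul, derivative_C, derivative_X,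
    zero_mul, mul_one, zero_add, eval_mul, eval_C, eval_comp, eval_X] at hy2
  rw [mul_comm a ((k : ℂ))] at hy2
  have hs3 := qPoly_scale g k hg2 a ha0 (g - 2) hmem3 (by omega) hkmem
  rw [if_neg (by omega : ¬ (g - 2) ≤ k)] at hs3
  have hx3 := congrArg (Polynomial.eval ((k : ℂ))) hs3
  simp only [eval_comp, eval_mul, eval_C, eval_X] at hx3
  rw [mul_comm a ((k : ℂ))] at hx3
  have hy3 := congrArg (fun p => (Polynomial.derivative p).eval ((k : ℂ))) hs3
  simp only [Polynomial.derivative_comp, derivative_mul, derivative_C, derivative_X,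
    zero_mul, mul_one, zero_add, eval_mul, eval_C, eval_comp, eval_X] at hy3
  rw [mul_comm a ((k : ℂ))] at hy3
  have hs4 := qPoly_scale g k hg2 a ha0 (g - 1) hmem4 (by omega) hkmem
  rw [if_neg (by omega : ¬ (g - 1) ≤ k)] at hs4
  have hx4 := congrArg (Polynomial.eval ((k : ℂ))) hs4
  simp only [eval_comp, eval_mul, eval_C, eval_X] at hx4
  rw [mul_comm a ((k : ℂ))] at hx4
  have hy4 := congrArg (fun p => (Polynomial.derivative p).eval ((k : ℂ))) hs4
  simp only [Polynomial.derivative_comp, derivative_mul, derivative_C, derivative_X,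
    zero_mul, mul_one, zero_add, eval_mul, eval_C, eval_comp, eval_X] at hy4
  rw [mul_comm a ((k : ℂ))] at hy4
  have hs5 := qPoly_scale g k hg2 a ha0 (k - 1) hmem5 (by omega) hkmem
  rw [if_pos (by omega : (k - 1) ≤ k), one_mul] at hs5
  have hx5 := congrArg (Polynomial.eval ((k : ℂ))) hs5
  simp only [eval_comp, eval_mul, eval_C, eval_X] at hx5
  rw [mul_comm a ((k : ℂ))] at hx5
  have hy5 := congrArg (fun p => (Polynomial.derivative p).eval ((k : ℂ))) hs5
  simp only [Polynomial.derivative_comp, derivative_mul, derivative_C, derivative_X,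
    zero_mul, mul_one, zero_add, eval_mul, eval_C, eval_comp, eval_X] at hy5
  rw [mul_comm a ((k : ℂ))] at hy5
  have hs6 := qPoly_scale g k hg2 a ha0 (k + 1) hmem6 (by omega) hkmem
  rw [if_neg (by omega : ¬ (k + 1) ≤ k)] at hs6
  have hx6 := congrArg (Polynomial.eval ((k : ℂ))) hs6
  simp only [eval_comp, eval_mul, eval_C, eval_X] at hx6
  rw [mul_comm a ((k : ℂ))] at hx6
  have hy6 := congrArg (fun p => (Polynomial.derivative p).eval ((k : ℂ))) hs6
  simp only [Polynomial.derivative_comp, derivative_mul, derivative_C, derivative_X,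
    zero_mul, mul_one, zero_add, eval_mul, eval_C, eval_comp, eval_X] at hy6
  rw [mul_comm a ((k : ℂ))] at hy6
  have hx3' : (qPoly g (aAP a) (g - 2) 1).eval ((k : ℂ) * a) = -(a ^ (g - 2) * (qPoly g (aAP a) (g - 2) 2).eval ((k : ℂ))) := by
    rw [hx3]; ring
  have hy3' : a * (derivative (qPoly g (aAP a) (g - 2) 1)).eval ((k : ℂ) * a) = -(a ^ (g - 2) * (derivative (qPoly g (aAP a) (g - 2) 2)).eval ((k : ℂ))) := by
    rw [hy3]; ring
  have hx4' : (qPoly g (aAP a) (g - 1) 1).eval ((k : ℂ) * a) = -(a ^ (g - 2) * (qPoly g (aAP a) (g - 1) 2).eval ((k : ℂ))) := by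
    rw [hx4]; ring
  have hy4' : a * (derivative (qPoly g (aAP a) (g - 1) 1)).eval ((k : ℂ) * a) = -(a ^ (g - 2) * (derivative (qPoly g (aAP a) (g - 1) 2)).eval ((k : ℂ))) := by
    rw [hy4]; ring
  have htau5 : tauVal g (aAP a) (k - 1) (k + 1) k = (qPoly g (aAP a) (k + 1) 1).eval ((k : ℂ) * a) * (qPoly g (aAP a) (k - 1) 2).eval ((k : ℂ)) - (qPoly g (aAP a) (k - 1) 1).eval ((k : ℂ) * a) * (qPoly g (aAP a) (k + 1) 2).eval ((k : ℂ)) := by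
    rw [tauVal, if_pos (by omega : k ≤ g), if_neg (by omega : ¬ k = g), if_neg (by omega : ¬ k = g),
      alpha_factor g k (aAP a) (k - 1) 1 hg2 hkmem (by omega),
      alpha_factor g k (aAP a) (k - 1) 2 hg2 hkmem (by omega),
      alpha_factor g k (aAP a) (k + 1) 1 hg2 hkmem (by omega),
      alpha_factor g k (aAP a) (k + 1) 2 hg2 hkmem (by omega), hp1, hp2]
    rw [eval_deriv_lin_mul, eval_deriv_lin_mul, eval_deriv_lin_mul, eval_deriv_lin_mul]
  have hA2ne := Aprod_two_ne g a
  have hA1 : (alphaPoly g (aAP a) k 1).eval ((k : ℂ) * a) ≠ 0 := alphaK_one_ne g k a ha0 hg2 (by omega)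
  have hA2 : (alphaPoly g (aAP a) k 2).eval ((k : ℂ)) ≠ 0 := alphaK_two_ne g k a hg2 (by omega)
  have hu5 : (qPoly g (aAP a) (k - 1) 2).eval ((k : ℂ)) ≠ 0 := eval_q_low_ne g k (k - 1) a hg2 (by omega) (by omega)
  have hu6 : (qPoly g (aAP a) (k + 1) 2).eval ((k : ℂ)) ≠ 0 := eval_q_high_ne g k (k + 1) a hg2 (by omega) (by omega) (by omega)
  have htau5ne : tauVal g (aAP a) (k - 1) (k + 1) k ≠ 0 := by
    have hval : tauVal g (aAP a) (k - 1) (k + 1) k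
        = -(2 * a ^ (g - 2) * ((qPoly g (aAP a) (k - 1) 2).eval ((k : ℂ)) * (qPoly g (aAP a) (k + 1) 2).eval ((k : ℂ)))) := by
      rw [htau5, hx5, hx6]; ring
    rw [hval]
    exact neg_ne_zero.2 (mul_ne_zero (mul_ne_zero two_ne_zero (pow_ne_zero _ ha0))
      (mul_ne_zero hu5 hu6))
  have hq12 := qPoly_factor_low g k (aAP a) 1 2 2 hg2 (by omega) hmem2 (by omega) (by omega)
  have hq21 := qPoly_factor_low g k (aAP a) 2 1 2 hg2 (by omega) hmem1 (by omega) (by omega)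
  have hE12 : (((Finset.Icc 1 (g - 1)).erase 2).erase k).erase 1
      = (((Finset.Icc 1 (g - 1)).erase 1).erase k).erase 2 := by
    ext r; simp only [Finset.mem_erase]; tauto
  rw [hE12] at hq21
  have hW12 : (qPoly g (aAP a) 1 2).eval ((k : ℂ)) * (derivative (qPoly g (aAP a) 2 2)).eval ((k : ℂ)) - (qPoly g (aAP a) 2 2).eval ((k : ℂ)) * (derivative (qPoly g (aAP a) 1 2)).eval ((k : ℂ))
      = 1 * 1 * (aAP a 1 2 - aAP a 2 2) * ((X * ∏ r ∈ (((Finset.Icc 1 (g - 1)).erase 1).erase k).erase 2, (X - C (aAP a r 2))).eval ((k : ℂ))) ^ 2 := by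
    rw [hq12, hq21]
    exact wronskian_pair_eval _ _ _ _ _ _
  have hW12ne : (qPoly g (aAP a) 1 2).eval ((k : ℂ)) * (derivative (qPoly g (aAP a) 2 2)).eval ((k : ℂ)) - (qPoly g (aAP a) 2 2).eval ((k : ℂ)) * (derivative (qPoly g (aAP a) 1 2)).eval ((k : ℂ)) ≠ 0 := by
    rw [hW12]
    refine mul_ne_zero (mul_ne_zero (mul_ne_zero one_ne_zero one_ne_zero) ?_)
      (pow_ne_zero _ ?_)
    · rw [aAP_two, aAP_two]; norm_num
    · rw [eval_mul, eval_X]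
      exact mul_ne_zero (Nat.cast_ne_zero.2 (by omega))
        (eval_lin_prod_ne k a _ (by simp))
  have hq34 := qPoly_factor_high g k (aAP a) (g - 2) (g - 1) 2 hg2 (by omega) hmem4 (by omega) (by omega)
  have hq43 := qPoly_factor_high g k (aAP a) (g - 1) (g - 2) 2 hg2 (by omega) hmem3 (by omega) (by omega)
  have hE34 : (((Finset.Icc 1 (g - 1)).erase (g - 1)).erase k).erase (g - 2)
      = (((Finset.Icc 1 (g - 1)).erase (g - 2)).erase k).erase (g - 1) := by
    ext r; simp only [Finset.mem_erase]; tauto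
  rw [hE34] at hq43
  have hW34 : (qPoly g (aAP a) (g - 2) 2).eval ((k : ℂ)) * (derivative (qPoly g (aAP a) (g - 1) 2)).eval ((k : ℂ)) - (qPoly g (aAP a) (g - 1) 2).eval ((k : ℂ)) * (derivative (qPoly g (aAP a) (g - 2) 2)).eval ((k : ℂ))
      = -(dcoef g (aAP a) 2 * aAP a (g - 2) 2 / Aprod g (aAP a) 2)
        * -(dcoef g (aAP a) 2 * aAP a (g - 1) 2 / Aprod g (aAP a) 2)
        * (aAP a (g - 2) 2 - aAP a (g - 1) 2) * ((∏ r ∈ (((Finset.Icc 1 (g - 1)).erase (g - 2)).erase k).erase (g - 1), (X - C (aAP a r 2))).eval ((k : ℂ))) ^ 2 := by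
    rw [hq34, hq43]
    exact wronskian_pair_eval _ _ _ _ _ _
  have hW34ne : (qPoly g (aAP a) (g - 2) 2).eval ((k : ℂ)) * (derivative (qPoly g (aAP a) (g - 1) 2)).eval ((k : ℂ)) - (qPoly g (aAP a) (g - 1) 2).eval ((k : ℂ)) * (derivative (qPoly g (aAP a) (g - 2) 2)).eval ((k : ℂ)) ≠ 0 := by
    rw [hW34]
    refine mul_ne_zero (mul_ne_zero (mul_ne_zero (chigh_ne g (g - 2) a (by omega))
      (chigh_ne g (g - 1) a (by omega))) ?_) (pow_ne_zero _ ?_)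
    · rw [aAP_two, aAP_two, Nat.cast_sub (by omega : 2 ≤ g), Nat.cast_sub (by omega : 1 ≤ g)]
      intro hz
      have hcon : (-1 : ℂ) = 0 := by linear_combination hz
      norm_num at hcon
    · exact eval_lin_prod_ne k a _ (by simp)
  rw [Matrix.isUnit_iff_isUnit_det, isUnit_iff_ne_zero]
  have hM : (Matrix.of fun (r c : Fin 5) =>
      (fun (i j : ℕ) =>
        ![(nuPoly g (aAP a) i j 1).eval ((k : ℂ) * a),
          (Polynomial.derivative (nuPoly g (aAP a) i j 1)).eval ((k : ℂ) * a),
          (nuPoly g (aAP a) i j 2).eval (k : ℂ),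
          (Polynomial.derivative (nuPoly g (aAP a) i j 2)).eval (k : ℂ),
          tauVal g (aAP a) i j k] r)
      ((![(1, k), (2, k), (k, g - 2), (k, g - 1), (k - 1, k + 1)] : Fin 5 → ℕ × ℕ) c).1
      ((![(1, k), (2, k), (k, g - 2), (k, g - 1), (k - 1, k + 1)] : Fin 5 → ℕ × ℕ) c).2)
      = !![-((alphaPoly g (aAP a) k 1).eval ((k : ℂ) * a) * (qPoly g (aAP a) 1 1).eval ((k : ℂ) * a)), -((alphaPoly g (aAP a) k 1).eval ((k : ℂ) * a) * (qPoly g (aAP a) 2 1).eval ((k : ℂ) * a)), (alphaPoly g (aAP a) k 1).eval ((k : ℂ) * a) * (qPoly g (aAP a) (g - 2) 1).eval ((k : ℂ) * a), (alphaPoly g (aAP a) k 1).eval ((k : ℂ) * a) * (qPoly g (aAP a) (g - 1) 1).eval ((k : ℂ) * a), 0;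
      -((alphaPoly g (aAP a) k 1).eval ((k : ℂ) * a) * (2 * (derivative (qPoly g (aAP a) 1 1)).eval ((k : ℂ) * a))), -((alphaPoly g (aAP a) k 1).eval ((k : ℂ) * a) * (2 * (derivative (qPoly g (aAP a) 2 1)).eval ((k : ℂ) * a))), (alphaPoly g (aAP a) k 1).eval ((k : ℂ) * a) * (2 * (derivative (qPoly g (aAP a) (g - 2) 1)).eval ((k : ℂ) * a)), (alphaPoly g (aAP a) k 1).eval ((k : ℂ) * a) * (2 * (derivative (qPoly g (aAP a) (g - 1) 1)).eval ((k : ℂ) * a)), 0;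
      -((alphaPoly g (aAP a) k 2).eval ((k : ℂ)) * (qPoly g (aAP a) 1 2).eval ((k : ℂ))), -((alphaPoly g (aAP a) k 2).eval ((k : ℂ)) * (qPoly g (aAP a) 2 2).eval ((k : ℂ))), (alphaPoly g (aAP a) k 2).eval ((k : ℂ)) * (qPoly g (aAP a) (g - 2) 2).eval ((k : ℂ)), (alphaPoly g (aAP a) k 2).eval ((k : ℂ)) * (qPoly g (aAP a) (g - 1) 2).eval ((k : ℂ)), 0;
      -((alphaPoly g (aAP a) k 2).eval ((k : ℂ)) * (2 * (derivative (qPoly g (aAP a) 1 2)).eval ((k : ℂ)))), -((alphaPoly g (aAP a) k 2).eval ((k : ℂ)) * (2 * (derivative (qPoly g (aAP a) 2 2)).eval ((k : ℂ)))), (alphaPoly g (aAP a) k 2).eval ((k : ℂ)) * (2 * (derivative (qPoly g (aAP a) (g - 2) 2)).eval ((k : ℂ))), (alphaPoly g (aAP a) k 2).eval ((k : ℂ)) * (2 * (derivative (qPoly g (aAP a) (g - 1) 2)).eval ((k : ℂ))), 0;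
      tauVal g (aAP a) 1 k k, tauVal g (aAP a) 2 k k, tauVal g (aAP a) k (g - 2) k, tauVal g (aAP a) k (g - 1) k, tauVal g (aAP a) (k - 1) (k + 1) k] := by
    ext r c
    fin_cases r <;> fin_cases c <;>
      simp only [Matrix.of_apply, Matrix.cons_val', Matrix.cons_val_zero, Matrix.empty_val',
        Matrix.cons_val_fin_one, Matrix.cons_val_one, Matrix.head_cons, Matrix.head_fin_const,
        Matrix.cons_val_two, Matrix.tail_cons, Matrix.cons_val_three, Matrix.cons_val_four,
        Matrix.cons_val_succ, Fin.isValue, Fin.zero_eta, Fin.mk_one, Fin.reduceFinMk, Matrix.cons_val]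
    exacts [e00h1, e01h1, e02h1, e03h1, e04h1,
      e10h1, e11h1, e12h1, e13h1, e14h1,
      e00h2, e01h2, e02h2, e03h2, e04h2,
      e10h2, e11h2, e12h2, e13h2, e14h2]
  rw [hM]
  have hdet := det5 a (a ^ (g - 2)) ((alphaPoly g (aAP a) k 1).eval ((k : ℂ) * a)) ((alphaPoly g (aAP a) k 2).eval ((k : ℂ)))
    ((qPoly g (aAP a) 1 1).eval ((k : ℂ) * a)) ((qPoly g (aAP a) 2 1).eval ((k : ℂ) * a)) ((qPoly g (aAP a) (g - 2) 1).eval ((k : ℂ) * a)) ((qPoly g (aAP a) (g - 1) 1).eval ((k : ℂ) * a))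
    ((derivative (qPoly g (aAP a) 1 1)).eval ((k : ℂ) * a)) ((derivative (qPoly g (aAP a) 2 1)).eval ((k : ℂ) * a)) ((derivative (qPoly g (aAP a) (g - 2) 1)).eval ((k : ℂ) * a)) ((derivative (qPoly g (aAP a) (g - 1) 1)).eval ((k : ℂ) * a))
    ((qPoly g (aAP a) 1 2).eval ((k : ℂ))) ((qPoly g (aAP a) 2 2).eval ((k : ℂ))) ((qPoly g (aAP a) (g - 2) 2).eval ((k : ℂ))) ((qPoly g (aAP a) (g - 1) 2).eval ((k : ℂ)))
    ((derivative (qPoly g (aAP a) 1 2)).eval ((k : ℂ))) ((derivative (qPoly g (aAP a) 2 2)).eval ((k : ℂ))) ((derivative (qPoly g (aAP a) (g - 2) 2)).eval ((k : ℂ))) ((derivative (qPoly g (aAP a) (g - 1) 2)).eval ((k : ℂ)))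
    (tauVal g (aAP a) 1 k k) (tauVal g (aAP a) 2 k k)
    (tauVal g (aAP a) k (g - 2) k) (tauVal g (aAP a) k (g - 1) k)
    (tauVal g (aAP a) (k - 1) (k + 1) k)
    hx1 hx2 hx3' hx4' hy1 hy2 hy3' hy4'
  intro hdet0
  rw [hdet0, mul_zero] at hdet
  refine (mul_ne_zero (mul_ne_zero htau5ne ?_) (mul_ne_zero hW12ne hW34ne)) hdet.symm
  refine mul_ne_zero (mul_ne_zero (mul_ne_zero (by norm_num) (pow_ne_zero _ hA1))
    (pow_ne_zero _ hA2)) (pow_ne_zero _ (pow_ne_zero _ ha0))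
end
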